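/- arXiv:1612.05685 — 16 statements merged into one kernel-verified Lean document; each statement's English description precedes it below -/
import Mathlib

section
/- Let f be convex on [m, M] and differentiable on an open interval containing [m, M], and suppose E[X] ∈ (m, M). Then 0 ≤ E[f(X)] − f(E[X]) ≤ ((M − E[X])(E[X] − m)/(M − m)) · sup_{t ∈ (m,M)} Θ_f(t; m, M); moreover this quantity is ≤ (1/4)(M − m) · sup_{t ∈ (m,M)} Θ_f(t; m, M) and also ≤ (M − E[X])(E[X] − m)(f′(M) − f′(m))/(M − m), and each of these is ≤ (1/4)(M − m)(f′(M) − f′(m)). -/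
open MeasureTheory Real

theorem stmt_0 {Ω : Type*} [MeasurableSpace Ω] (P : Measure Ω) [IsProbabilityMeasure P]
    (X : Ω → ℝ) (m M : ℝ) (hmM : m < M)
    (hX : ∀ᵐ ω ∂P, X ω ∈ Set.Icc m M)
    (hXint : Integrable X P)
    (f : ℝ → ℝ) (a b : ℝ) (ham : a < m) (hMb : M < b)
    (hconv : ConvexOn ℝ (Set.Icc m M) f)
    (hdiff : ∀ x ∈ Set.Ioo a b, DifferentiableAt ℝ f x)
    (hfXint : Integrable (fun ω => f (X ω)) P)
    (hmean : (∫ ω, X ω ∂P) ∈ Set.Ioo m M) :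
    let μ := ∫ ω, X ω ∂P
    let S := sSup ((fun t => (f M - f t) / (M - t) - (f t - f m) / (t - m)) '' Set.Ioo m M)
    0 ≤ (∫ ω, f (X ω) ∂P) - f μ ∧
    (∫ ω, f (X ω) ∂P) - f μ ≤ (M - μ) * (μ - m) / (M - m) * S ∧
    (M - μ) * (μ - m) / (M - m) * S ≤ (1 / 4) * (M - m) * S ∧
    (M - μ) * (μ - m) / (M - m) * S ≤
      (M - μ) * (μ - m) * (deriv f M - deriv f m) / (M - m) ∧
    (1 / 4) * (M - m) * S ≤ (1 / 4) * (M - m) * (deriv f M - deriv f m) ∧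
    (M - μ) * (μ - m) * (deriv f M - deriv f m) / (M - m) ≤
      (1 / 4) * (M - m) * (deriv f M - deriv f m) := by
  intro μ S
  have hsub : Set.Icc m M ⊆ Set.Ioo a b := Set.Icc_subset_Ioo ham hMb
  have hd : ∀ x ∈ Set.Icc m M, DifferentiableAt ℝ f x := fun x hx => hdiff x (hsub hx)
  have hcont : ContinuousOn f (Set.Icc m M) := fun x hx =>
    (hd x hx).continuousAt.continuousWithinAt
  have hmem : m ∈ Set.Icc m M := Set.left_mem_Icc.2 hmM.le
  have hMem : M ∈ Set.Icc m M := Set.right_mem_Icc.2 hmM.le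
  have hmμ : m < μ := hmean.1
  have hμM : μ < M := hmean.2
  have hMm : (0:ℝ) < M - m := sub_pos.2 hmM
  set g : ℝ → ℝ := fun t => (f M - f t) / (M - t) - (f t - f m) / (t - m) with hgdef
  have hdm : deriv f m ≤ deriv f M := by
    have h1 := hconv.deriv_le_slope hmem hMem hmM (hd m hmem)
    have h2 := hconv.slope_le_deriv hmem hMem hmM (hd M hMem)
    exact h1.trans h2
  have hub : ∀ t ∈ Set.Ioo m M, g t ≤ deriv f M - deriv f m := by
    intro t ht
    have htI : t ∈ Set.Icc m M := Set.Ioo_subset_Icc_self ht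
    have h1 := hconv.deriv_le_slope hmem htI ht.1 (hd m hmem)
    have h2 := hconv.slope_le_deriv htI hMem ht.2 (hd M hMem)
    rw [slope_def_field] at h1 h2
    simp only [hgdef]
    linarith
  have hnn : ∀ t ∈ Set.Ioo m M, 0 ≤ g t := by
    intro t ht
    have := hconv.slope_mono_adjacent hmem hMem ht.1 ht.2
    simp only [hgdef]
    linarith
  have hbdd : BddAbove (g '' Set.Ioo m M) := by
    refine ⟨deriv f M - deriv f m, ?_⟩
    rintro s ⟨t, ht, rfl⟩
    exact hub t ht
  have hgμS : g μ ≤ S := le_csSup hbdd ⟨μ, hmean, rfl⟩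
  have hS0 : (0:ℝ) ≤ S := le_trans (hnn μ hmean) hgμS
  have hSle : S ≤ deriv f M - deriv f m := by
    refine Real.sSup_le ?_ (by linarith)
    rintro s ⟨t, ht, rfl⟩
    exact hub t ht
  have hJ : f μ ≤ ∫ ω, f (X ω) ∂P :=
    hconv.map_integral_le hcont isClosed_Icc hX hXint hfXint
  -- chord bound
  set c1 : ℝ := (M * f m - m * f M) / (M - m) with hc1
  set c2 : ℝ := (f M - f m) / (M - m) with hc2
  have hchordpt : ∀ x ∈ Set.Icc m M, f x ≤ c1 + c2 * x := by
    intro x hx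
    have hxm : 0 ≤ x - m := by linarith [hx.1]
    have hxM : 0 ≤ M - x := by linarith [hx.2]
    have h := hconv.2 hmem hMem
      (show (0:ℝ) ≤ (M - x) / (M - m) by positivity)
      (show (0:ℝ) ≤ (x - m) / (M - m) by positivity)
      (show (M - x) / (M - m) + (x - m) / (M - m) = 1 by field_simp; ring)
    have hx' : ((M - x) / (M - m)) • m + ((x - m) / (M - m)) • M = x := by
      simp only [smul_eq_mul]
      field_simp
      ring
    rw [hx', smul_eq_mul, smul_eq_mul] at h
    have heq : (M - x) / (M - m) * f m + (x - m) / (M - m) * f M = c1 + c2 * x := by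
      rw [hc1, hc2]
      field_simp
      ring
    linarith [heq ▸ h]
  have hint : ∫ ω, (c1 + c2 * X ω) ∂P = c1 + c2 * μ := by
    rw [integral_add (integrable_const c1) (hXint.const_mul c2), integral_const,
      integral_const_mul]
    simp
    exact Or.inl rfl
  have hLR : (∫ ω, f (X ω) ∂P) ≤ c1 + c2 * μ := by
    rw [← hint]
    refine integral_mono_ae hfXint ((integrable_const c1).add (hXint.const_mul c2)) ?_
    filter_upwards [hX] with ω hω
    exact hchordpt (X ω) hω
  have hμM0 : M - μ ≠ 0 := by linarith
  have hμm0 : μ - m ≠ 0 := by linarith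
  have hMm0 : M - m ≠ 0 := by linarith
  have key : c1 + c2 * μ - f μ = (M - μ) * (μ - m) / (M - m) * g μ := by
    rw [hc1, hc2, hgdef]
    field_simp
    ring
  have hcoeff : (0:ℝ) ≤ (M - μ) * (μ - m) / (M - m) := by
    apply div_nonneg
    · nlinarith
    · linarith
  have hq : (M - μ) * (μ - m) ≤ 1 / 4 * (M - m) ^ 2 := by
    nlinarith [sq_nonneg (M - μ - (μ - m))]
  refine ⟨by linarith, ?_, ?_, ?_, ?_, ?_⟩
  · calc (∫ ω, f (X ω) ∂P) - f μ ≤ c1 + c2 * μ - f μ := by linarith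
      _ = (M - μ) * (μ - m) / (M - m) * g μ := key
      _ ≤ (M - μ) * (μ - m) / (M - m) * S := mul_le_mul_of_nonneg_left hgμS hcoeff
  · have hle : (M - μ) * (μ - m) / (M - m) ≤ 1 / 4 * (M - m) := by
      rw [div_le_iff₀ hMm]
      nlinarith
    exact mul_le_mul_of_nonneg_right hle hS0
  · have : (M - μ) * (μ - m) * (deriv f M - deriv f m) / (M - m)
        = (M - μ) * (μ - m) / (M - m) * (deriv f M - deriv f m) := by ring
    rw [this]
    exact mul_le_mul_of_nonneg_left hSle hcoeff
  · exact mul_le_mul_of_nonneg_left hSle (by linarith)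
  · rw [div_le_iff₀ hMm]
    nlinarith [mul_le_mul_of_nonneg_right hq (by linarith : (0:ℝ) ≤ deriv f M - deriv f m)]
end

section
/- Let f be convex on [m, M] and differentiable on an open interval containing [m, M], and suppose E[X] ∈ (m, M). Then 0 ≤ E[f(X)] − f(E[X]) ≤ (1/4)(M − m) Θ_f(E[X]; m, M) ≤ (1/4)(M − m) · sup_{t ∈ (m,M)} Θ_f(t; m, M) ≤ (1/4)(M − m)(f′(M) − f′(m)). -/
open MeasureTheory Real

theorem stmt_1 {Ω : Type*} [MeasurableSpace Ω] (P : Measure Ω) [IsProbabilityMeasure P]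
    (X : Ω → ℝ) (m M : ℝ) (hmM : m < M)
    (hX : ∀ᵐ ω ∂P, X ω ∈ Set.Icc m M)
    (hXint : Integrable X P)
    (f : ℝ → ℝ) (a b : ℝ) (ham : a < m) (hMb : M < b)
    (hconv : ConvexOn ℝ (Set.Icc m M) f)
    (hdiff : ∀ x ∈ Set.Ioo a b, DifferentiableAt ℝ f x)
    (hfXint : Integrable (fun ω => f (X ω)) P)
    (hmean : (∫ ω, X ω ∂P) ∈ Set.Ioo m M) :
    let μ := ∫ ω, X ω ∂P
    let Θ : ℝ → ℝ := fun t => (f M - f t) / (M - t) - (f t - f m) / (t - m)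
    let S := sSup (Θ '' Set.Ioo m M)
    0 ≤ (∫ ω, f (X ω) ∂P) - f μ ∧
    (∫ ω, f (X ω) ∂P) - f μ ≤ (1 / 4) * (M - m) * Θ μ ∧
    (1 / 4) * (M - m) * Θ μ ≤ (1 / 4) * (M - m) * S ∧
    (1 / 4) * (M - m) * S ≤ (1 / 4) * (M - m) * (deriv f M - deriv f m) := by
  intro μ Θ S
  have hIccIoo : Set.Icc m M ⊆ Set.Ioo a b := fun x hx =>
    ⟨lt_of_lt_of_le ham hx.1, lt_of_le_of_lt hx.2 hMb⟩
  have hcont : ContinuousOn f (Set.Icc m M) := fun x hx =>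
    ((hdiff x (hIccIoo hx)).continuousAt).continuousWithinAt
  have hμm : m < μ := hmean.1
  have hμM : μ < M := hmean.2
  have hmm : (m : ℝ) ∈ Set.Icc m M := Set.left_mem_Icc.2 hmM.le
  have hMM : (M : ℝ) ∈ Set.Icc m M := Set.right_mem_Icc.2 hmM.le
  have hμmem : μ ∈ Set.Icc m M := ⟨hμm.le, hμM.le⟩
  -- Jensen
  have hJ : f μ ≤ ∫ ω, f (X ω) ∂P := by
    have := hconv.map_average_le hcont isClosed_Icc hX hXint hfXint
    simpa [average_eq_integral] using this
  -- bound each Θ t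
  have hΘbound : ∀ t ∈ Set.Ioo m M, Θ t ≤ deriv f M - deriv f m := by
    intro t ht
    have h1 : slope f t M ≤ deriv f M :=
      hconv.slope_le_deriv ⟨ht.1.le, ht.2.le⟩ hMM ht.2
        (hdiff M (hIccIoo hMM))
    have h2 : deriv f m ≤ slope f m t :=
      hconv.deriv_le_slope hmm ⟨ht.1.le, ht.2.le⟩ ht.1
        (hdiff m (hIccIoo hmm))
    have e1 : slope f t M = (f M - f t) / (M - t) := slope_def_field f t M
    have e2 : slope f m t = (f t - f m) / (t - m) := slope_def_field f m t
    simp only [Θ]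
    rw [← e1, ← e2]
    linarith
  have hΘμnn : 0 ≤ Θ μ := by
    have := hconv.slope_mono_adjacent hmm hMM hμm hμM
    simp only [Θ]
    linarith
  -- key Lah-Ribarič bound
  have hub : ∫ ω, f (X ω) ∂P ≤ ((M - μ) * f m + (μ - m) * f M) / (M - m) := by
    have hae : ∀ᵐ ω ∂P, f (X ω) ≤ ((M - X ω) * f m + (X ω - m) * f M) / (M - m) := by
      filter_upwards [hX] with ω hω
      have hMm : (0:ℝ) < M - m := by linarith
      have hcoef : (M - X ω) / (M - m) * m + (X ω - m) / (M - m) * M = X ω := by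
        field_simp
        ring
      have h := hconv.2 hmm hMM
        (show (0:ℝ) ≤ (M - X ω) / (M - m) from div_nonneg (by linarith [hω.2]) hMm.le)
        (show (0:ℝ) ≤ (X ω - m) / (M - m) from div_nonneg (by linarith [hω.1]) hMm.le)
        (show (M - X ω) / (M - m) + (X ω - m) / (M - m) = 1 by field_simp; ring)
      simp only [smul_eq_mul] at h
      rw [hcoef] at h
      calc f (X ω) ≤ (M - X ω) / (M - m) * f m + (X ω - m) / (M - m) * f M := h
        _ = ((M - X ω) * f m + (X ω - m) * f M) / (M - m) := by ring
    have hi1 : Integrable (fun ω => (M - X ω) * f m) P :=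
      ((integrable_const M).sub hXint).mul_const (f m)
    have hi2 : Integrable (fun ω => (X ω - m) * f M) P :=
      (hXint.sub (integrable_const m)).mul_const (f M)
    have hgint : Integrable (fun ω => ((M - X ω) * f m + (X ω - m) * f M) / (M - m)) P :=
      (hi1.add hi2).div_const _
    calc ∫ ω, f (X ω) ∂P
        ≤ ∫ ω, ((M - X ω) * f m + (X ω - m) * f M) / (M - m) ∂P :=
          integral_mono_ae hfXint hgint hae
      _ = ((M - μ) * f m + (μ - m) * f M) / (M - m) := by
          rw [integral_div]
          congr 1
          rw [integral_add hi1 hi2,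
            integral_mul_const, integral_mul_const, integral_sub (integrable_const M) hXint,
            integral_sub hXint (integrable_const m), integral_const]
          simp [μ]
    -- end calc
  have hΘμval : ((M - μ) * f m + (μ - m) * f M) / (M - m) - f μ
      = ((μ - m) * (M - μ) / (M - m)) * Θ μ := by
    simp only [Θ]
    have h1 : M - μ ≠ 0 := by linarith
    have h2 : μ - m ≠ 0 := by linarith
    have h3 : M - m ≠ 0 := by linarith
    field_simp
    ring
  have hc : (μ - m) * (M - μ) / (M - m) ≤ (M - m) / 4 := by
    rw [div_le_div_iff₀ (by linarith) (by norm_num)]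
    nlinarith [sq_nonneg ((M - μ) - (μ - m))]
  refine ⟨by linarith, ?_, ?_, ?_⟩
  · have : (∫ ω, f (X ω) ∂P) - f μ ≤ ((μ - m) * (M - μ) / (M - m)) * Θ μ := by
      rw [← hΘμval]; linarith
    calc (∫ ω, f (X ω) ∂P) - f μ ≤ ((μ - m) * (M - μ) / (M - m)) * Θ μ := this
      _ ≤ ((M - m) / 4) * Θ μ := mul_le_mul_of_nonneg_right hc hΘμnn
      _ = (1 / 4) * (M - m) * Θ μ := by ring
  · have hbdd : BddAbove (Θ '' Set.Ioo m M) := by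
      refine ⟨deriv f M - deriv f m, ?_⟩
      rintro y ⟨t, ht, rfl⟩
      exact hΘbound t ht
    have hle : Θ μ ≤ S := le_csSup hbdd (Set.mem_image_of_mem Θ hmean)
    have h14 : (0:ℝ) ≤ (1 / 4) * (M - m) := by nlinarith
    exact mul_le_mul_of_nonneg_left hle h14
  · have hS : S ≤ deriv f M - deriv f m := by
      apply csSup_le ⟨Θ μ, Set.mem_image_of_mem Θ hmean⟩
      rintro y ⟨t, ht, rfl⟩
      exact hΘbound t ht
    have h14 : (0:ℝ) ≤ (1 / 4) * (M - m) := by nlinarith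
    exact mul_le_mul_of_nonneg_left hS h14
end

section
/- Let f be convex and continuous on [m, M]. Then 0 ≤ E[f(X)] − f(E[X]) ≤ (1 + 2|E[X] − (m + M)/2|/(M − m)) · [(f(m) + f(M))/2 − f((m + M)/2)] ≤ f(m) + f(M) − 2 f((m + M)/2). -/
open MeasureTheory Real

theorem stmt_2 {Ω : Type*} [MeasurableSpace Ω] (P : Measure Ω) [IsProbabilityMeasure P]
    (X : Ω → ℝ) (m M : ℝ) (hmM : m < M)
    (hX : ∀ᵐ ω ∂P, X ω ∈ Set.Icc m M)
    (hXint : Integrable X P)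
    (f : ℝ → ℝ)
    (hconv : ConvexOn ℝ (Set.Icc m M) f)
    (hcont : ContinuousOn f (Set.Icc m M))
    (hfXint : Integrable (fun ω => f (X ω)) P) :
    let μ := ∫ ω, X ω ∂P
    0 ≤ (∫ ω, f (X ω) ∂P) - f μ ∧
    (∫ ω, f (X ω) ∂P) - f μ ≤
      (1 + 2 * |μ - (m + M) / 2| / (M - m)) * ((f m + f M) / 2 - f ((m + M) / 2)) ∧
    (1 + 2 * |μ - (m + M) / 2| / (M - m)) * ((f m + f M) / 2 - f ((m + M) / 2)) ≤
      f m + f M - 2 * f ((m + M) / 2) := by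
  intro μ
  have hMm : (0:ℝ) < M - m := by linarith
  have hne : (M - m) ≠ 0 := hMm.ne'
  -- μ bounds
  have hmμ : m ≤ μ := by
    have h := integral_mono_ae (integrable_const m) hXint (hX.mono fun ω h => h.1)
    simpa using h
  have hμM : μ ≤ M := by
    have h := integral_mono_ae hXint (integrable_const M) (hX.mono fun ω h => h.2)
    simpa using h
  -- Jensen lower bound
  have hjensen : f μ ≤ ∫ ω, f (X ω) ∂P :=
    hconv.map_integral_le hcont isClosed_Icc hX hXint hfXint
  -- chord
  set α := (f M - f m) / (M - m) with hα
  set β := (M * f m - m * f M) / (M - m) with hβ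
  have hchord : ∀ x ∈ Set.Icc m M, f x ≤ α * x + β := by
    intro x hx
    have ha : (0:ℝ) ≤ (M - x) / (M - m) := div_nonneg (by linarith [hx.2]) hMm.le
    have hb : (0:ℝ) ≤ (x - m) / (M - m) := div_nonneg (by linarith [hx.1]) hMm.le
    have hab : (M - x) / (M - m) + (x - m) / (M - m) = 1 := by field_simp; ring
    have hcomb : (M - x) / (M - m) * m + (x - m) / (M - m) * M = x := by
      field_simp; ring
    have hkey := hconv.2 (Set.left_mem_Icc.2 hmM.le) (Set.right_mem_Icc.2 hmM.le) ha hb hab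
    simp only [smul_eq_mul] at hkey
    rw [hcomb] at hkey
    have heq : (M - x) / (M - m) * f m + (x - m) / (M - m) * f M = α * x + β := by
      rw [hα, hβ]; field_simp; ring
    linarith [heq ▸ hkey]
  have hint2 : Integrable (fun ω => α * X ω + β) P :=
    (hXint.const_mul α).add (integrable_const β)
  have hIchord : (∫ ω, f (X ω) ∂P) ≤ α * μ + β := by
    have h := integral_mono_ae hfXint hint2 (hX.mono fun ω h => hchord _ h)
    rwa [integral_add (hXint.const_mul α) (integrable_const β), integral_const_mul,
      integral_const, probReal_univ, smul_eq_mul, one_mul] at h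
  have hL'' : (∫ ω, f (X ω) ∂P) * (M - m) ≤ (f M - f m) * μ + (M * f m - m * f M) := by
    have h2 : α * μ + β = ((f M - f m) * μ + (M * f m - m * f M)) / (M - m) := by
      rw [hα, hβ]; ring
    rw [h2] at hIchord
    exact (le_div_iff₀ hMm).1 hIchord
  -- midpoint convexity
  have hc : f ((m + M) / 2) ≤ (f m + f M) / 2 := by
    have hkey := hconv.2 (Set.left_mem_Icc.2 hmM.le) (Set.right_mem_Icc.2 hmM.le)
      (by norm_num : (0:ℝ) ≤ 1/2) (by norm_num : (0:ℝ) ≤ 1/2) (by norm_num)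
    simp only [smul_eq_mul] at hkey
    rw [show (1:ℝ)/2*m+1/2*M = (m+M)/2 by ring] at hkey
    linarith
  have hΔ0 : (0:ℝ) ≤ (f m + f M) / 2 - f ((m + M) / 2) := by linarith
  -- middle inequality
  have hmid : (∫ ω, f (X ω) ∂P) - f μ ≤
      (1 + 2 * |μ - (m + M) / 2| / (M - m)) * ((f m + f M) / 2 - f ((m + M) / 2)) := by
    have hexpand : ∀ t : ℝ, (1 + 2 * t / (M - m)) * ((f m + f M) / 2 - f ((m + M) / 2)) =
        ((M - m) + 2 * t) * ((f m + f M) / 2 - f ((m + M) / 2)) / (M - m) := by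
      intro t; rw [eq_div_iff hne]; field_simp
    rcases le_or_gt ((m + M) / 2) μ with hcase | hcase
    · rw [abs_of_nonneg (by linarith), hexpand, le_div_iff₀ hMm]
      have hμm : m < μ := by linarith
      have ha : (0:ℝ) ≤ (μ - (m + M) / 2) / (μ - m) := div_nonneg (by linarith) (by linarith)
      have hb : (0:ℝ) ≤ ((m + M) / 2 - m) / (μ - m) := div_nonneg (by linarith) (by linarith)
      have hneμ : (μ - m) ≠ 0 := sub_ne_zero.2 hμm.ne'
      have hab : (μ - (m + M) / 2) / (μ - m) + ((m + M) / 2 - m) / (μ - m) = 1 := by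
        field_simp; ring
      have hcomb : (μ - (m + M) / 2) / (μ - m) * m + ((m + M) / 2 - m) / (μ - m) * μ =
          (m + M) / 2 := by field_simp; ring
      have hfc := hconv.2 (Set.left_mem_Icc.2 hmM.le) (Set.mem_Icc.2 ⟨hmμ, hμM⟩) ha hb hab
      simp only [smul_eq_mul] at hfc
      rw [hcomb] at hfc
      have hfc' : f ((m + M) / 2) * (μ - m) ≤
          (μ - (m + M) / 2) * f m + ((m + M) / 2 - m) * f μ := by
        have h1 : (μ - (m + M) / 2) / (μ - m) * f m + ((m + M) / 2 - m) / (μ - m) * f μ =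
            ((μ - (m + M) / 2) * f m + ((m + M) / 2 - m) * f μ) / (μ - m) := by ring
        rw [h1, le_div_iff₀ (by linarith : (0:ℝ) < μ - m)] at hfc
        linarith
      linarith [hfc', hL'']
    · rw [abs_of_nonpos (by linarith), hexpand, le_div_iff₀ hMm]
      have hμM' : μ < M := by linarith
      have ha : (0:ℝ) ≤ ((m + M) / 2 - μ) / (M - μ) := div_nonneg (by linarith) (by linarith)
      have hb : (0:ℝ) ≤ (M - (m + M) / 2) / (M - μ) := div_nonneg (by linarith) (by linarith)
      have hneμ : (M - μ) ≠ 0 := sub_ne_zero.2 hμM'.ne'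
      have hab : ((m + M) / 2 - μ) / (M - μ) + (M - (m + M) / 2) / (M - μ) = 1 := by
        field_simp; ring
      have hcomb : ((m + M) / 2 - μ) / (M - μ) * M + (M - (m + M) / 2) / (M - μ) * μ =
          (m + M) / 2 := by field_simp; ring
      have hfc := hconv.2 (Set.right_mem_Icc.2 hmM.le) (Set.mem_Icc.2 ⟨hmμ, hμM⟩) ha hb hab
      simp only [smul_eq_mul] at hfc
      rw [hcomb] at hfc
      have hfc' : f ((m + M) / 2) * (M - μ) ≤
          ((m + M) / 2 - μ) * f M + (M - (m + M) / 2) * f μ := by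
        have h1 : ((m + M) / 2 - μ) / (M - μ) * f M + (M - (m + M) / 2) / (M - μ) * f μ =
            (((m + M) / 2 - μ) * f M + (M - (m + M) / 2) * f μ) / (M - μ) := by ring
        rw [h1, le_div_iff₀ (by linarith : (0:ℝ) < M - μ)] at hfc
        linarith
      linarith [hfc', hL'']
  refine ⟨by linarith, hmid, ?_⟩
  have habs : |μ - (m + M) / 2| ≤ (M - m) / 2 := by
    rw [abs_le]; constructor <;> linarith
  have hfac : 1 + 2 * |μ - (m + M) / 2| / (M - m) ≤ 2 := by
    have h2 : 2 * |μ - (m + M) / 2| / (M - m) ≤ 1 := by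
      rw [div_le_one hMm]; linarith [habs]
    linarith
  have hfac0 : (0:ℝ) ≤ 1 + 2 * |μ - (m + M) / 2| / (M - m) := by positivity
  calc (1 + 2 * |μ - (m + M) / 2| / (M - m)) * ((f m + f M) / 2 - f ((m + M) / 2))
      ≤ 2 * ((f m + f M) / 2 - f ((m + M) / 2)) := mul_le_mul_of_nonneg_right hfac hΔ0
    _ = f m + f M - 2 * f ((m + M) / 2) := by ring
end

section
/- Let Φ : C → ℝ be a convex function on a convex subset C of a real vector space, let x, y ∈ C and t ∈ [0, 1]. Then 2·min{t, 1 − t}·[(Φ(x) + Φ(y))/2 − Φ((x + y)/2)] ≤ t·Φ(x) + (1 − t)·Φ(y) − Φ(t·x + (1 − t)·y) ≤ 2·max{t, 1 − t}·[(Φ(x) + Φ(y))/2 − Φ((x + y)/2)]. -/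
theorem stmt_4 {V : Type*} [AddCommGroup V] [Module ℝ V]
    (C : Set V) (hC : Convex ℝ C) (Φ : V → ℝ) (hΦ : ConvexOn ℝ C Φ)
    (x y : V) (hx : x ∈ C) (hy : y ∈ C) (t : ℝ) (ht : t ∈ Set.Icc (0 : ℝ) 1) :
    2 * min t (1 - t) * ((Φ x + Φ y) / 2 - Φ (((1 : ℝ) / 2) • (x + y))) ≤
      t * Φ x + (1 - t) * Φ y - Φ (t • x + (1 - t) • y) ∧
    t * Φ x + (1 - t) * Φ y - Φ (t • x + (1 - t) • y) ≤
      2 * max t (1 - t) * ((Φ x + Φ y) / 2 - Φ (((1 : ℝ) / 2) • (x + y))) := by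
  obtain ⟨ht0, ht1⟩ := ht
  have hm : ((1 : ℝ) / 2) • (x + y) ∈ C := by
    have := hC hx hy (by norm_num : (0:ℝ) ≤ 1/2) (by norm_num : (0:ℝ) ≤ 1/2) (by norm_num)
    simpa [smul_add] using this
  have hz : t • x + (1 - t) • y ∈ C := hC hx hy ht0 (by linarith) (by ring)
  rcases le_or_gt t (1/2) with h | h
  · have hmin : min t (1 - t) = t := min_eq_left (by linarith)
    have hmax : max t (1 - t) = 1 - t := max_eq_right (by linarith)
    rw [hmin, hmax]
    -- lower bound
    have h1 : Φ (t • x + (1 - t) • y) ≤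
        2 * t * Φ (((1 : ℝ) / 2) • (x + y)) + (1 - 2 * t) * Φ y := by
      have := hΦ.2 hm hy (by linarith : (0:ℝ) ≤ 2 * t) (by linarith : (0:ℝ) ≤ 1 - 2 * t)
        (by ring)
      have e : (2 * t) • (((1 : ℝ) / 2) • (x + y)) + (1 - 2 * t) • y
          = t • x + (1 - t) • y := by module
      rwa [e] at this
    -- upper bound
    have h1t : (0:ℝ) < 1 - t := by linarith
    have h2 : Φ (((1 : ℝ) / 2) • (x + y)) ≤
        (1 / (2 * (1 - t))) * Φ (t • x + (1 - t) • y)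
          + (1 - 1 / (2 * (1 - t))) * Φ x := by
      have hc0 : (0:ℝ) ≤ 1 / (2 * (1 - t)) := by positivity
      have hc1 : (0:ℝ) ≤ 1 - 1 / (2 * (1 - t)) := by
        rw [sub_nonneg, div_le_one (by linarith)]; linarith
      have := hΦ.2 hz hx hc0 hc1 (by ring)
      have e : (1 / (2 * (1 - t))) • (t • x + (1 - t) • y)
          + (1 - 1 / (2 * (1 - t))) • x = ((1 : ℝ) / 2) • (x + y) := by
        match_scalars <;> field_simp <;> ring
      rwa [e] at this
    have h3 := mul_le_mul_of_nonneg_left h2 (by linarith : (0:ℝ) ≤ 2 * (1 - t))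
    have e2 : 2 * (1 - t) * ((1 / (2 * (1 - t))) * Φ (t • x + (1 - t) • y)
        + (1 - 1 / (2 * (1 - t))) * Φ x)
        = Φ (t • x + (1 - t) • y) + (1 - 2 * t) * Φ x := by
      have key : 2 * (1 - t) * (1 / (2 * (1 - t))) = 1 := by
        field_simp
      linear_combination (Φ (t • x + (1 - t) • y) - Φ x) * key
    rw [e2] at h3
    constructor <;> linarith
  · have hmin : min t (1 - t) = 1 - t := min_eq_right (by linarith)
    have hmax : max t (1 - t) = t := max_eq_left (by linarith)
    rw [hmin, hmax]
    have h1 : Φ (t • x + (1 - t) • y) ≤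
        2 * (1 - t) * Φ (((1 : ℝ) / 2) • (x + y)) + (2 * t - 1) * Φ x := by
      have := hΦ.2 hm hx (by linarith : (0:ℝ) ≤ 2 * (1 - t))
        (by linarith : (0:ℝ) ≤ 2 * t - 1) (by ring)
      have e : (2 * (1 - t)) • (((1 : ℝ) / 2) • (x + y)) + (2 * t - 1) • x
          = t • x + (1 - t) • y := by module
      rwa [e] at this
    have ht' : (0:ℝ) < t := by linarith
    have h2 : Φ (((1 : ℝ) / 2) • (x + y)) ≤
        (1 / (2 * t)) * Φ (t • x + (1 - t) • y) + (1 - 1 / (2 * t)) * Φ y := by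
      have hc0 : (0:ℝ) ≤ 1 / (2 * t) := by positivity
      have hc1 : (0:ℝ) ≤ 1 - 1 / (2 * t) := by
        rw [sub_nonneg, div_le_one (by linarith)]; linarith
      have := hΦ.2 hz hy hc0 hc1 (by ring)
      have e : (1 / (2 * t)) • (t • x + (1 - t) • y)
          + (1 - 1 / (2 * t)) • y = ((1 : ℝ) / 2) • (x + y) := by
        match_scalars <;> field_simp <;> ring
      rwa [e] at this
    have h3 := mul_le_mul_of_nonneg_left h2 (by linarith : (0:ℝ) ≤ 2 * t)
    have e2 : 2 * t * ((1 / (2 * t)) * Φ (t • x + (1 - t) • y)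
        + (1 - 1 / (2 * t)) * Φ y)
        = Φ (t • x + (1 - t) • y) + (2 * t - 1) * Φ y := by
      have key : 2 * t * (1 / (2 * t)) = 1 := by
        field_simp
      linear_combination (Φ (t • x + (1 - t) • y) - Φ y) * key
    rw [e2] at h3
    constructor <;> linarith
end

section
/- Let f be twice differentiable on an open interval containing [m, M] with k ≤ f″(z) ≤ K for all z ∈ [m, M], where K > k ≥ 0. Then for every t ∈ [m, M]: (K/2)·E[(X − t)²] ≥ E[X·f′(X)] − t·E[f′(X)] + f(t) − E[f(X)] ≥ (k/2)·E[(X − t)²]. -/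
open MeasureTheory Real Set

lemma tangent_aux {f : ℝ → ℝ} {a b m M k : ℝ} (ham : a < m) (hMb : M < b)
    (hdiff1 : ∀ x ∈ Set.Ioo a b, DifferentiableAt ℝ f x)
    (hdiff2 : ∀ x ∈ Set.Ioo a b, DifferentiableAt ℝ (deriv f) x)
    (hbk : ∀ z ∈ Set.Icc m M, k ≤ deriv (deriv f) z)
    {x t : ℝ} (hx : x ∈ Set.Icc m M) (ht : t ∈ Set.Icc m M) :
    k / 2 * (t - x) ^ 2 ≤ f t - f x - deriv f x * (t - x) := by
  set g : ℝ → ℝ := fun z => f z - k / 2 * z ^ 2 with hg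
  have hIcc : Set.Icc m M ⊆ Set.Ioo a b := fun z hz =>
    ⟨lt_of_lt_of_le ham hz.1, lt_of_le_of_lt hz.2 hMb⟩
  have hgdiff : ∀ z ∈ Set.Ioo a b, DifferentiableAt ℝ g z := fun z hz =>
    (hdiff1 z hz).sub (((differentiableAt_pow 2).const_mul _))
  have hgderiv : ∀ z ∈ Set.Ioo a b, deriv g z = deriv f z - k * z := by
    intro z hz
    have h2 : HasDerivAt g (deriv f z - k / 2 * (2 * z ^ 1)) z :=
      (hdiff1 z hz).hasDerivAt.sub ((hasDerivAt_pow 2 z).const_mul (k / 2))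
    rw [h2.deriv]; ring
  have hgd2 : ∀ z ∈ Set.Ioo a b, deriv (deriv g) z = deriv (deriv f) z - k := by
    intro z hz
    have heq : deriv g =ᶠ[nhds z] fun w => deriv f w - k * w := by
      filter_upwards [Ioo_mem_nhds hz.1 hz.2] with w hw using hgderiv w hw
    rw [heq.deriv_eq]
    have hd : HasDerivAt (fun w => deriv f w - k * w) (deriv (deriv f) z - k * 1) z :=
      (hdiff2 z hz).hasDerivAt.sub ((hasDerivAt_id z).const_mul k)
    rw [hd.deriv]; ring
  have hconv : ConvexOn ℝ (Set.Icc m M) g := by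
    apply convexOn_of_deriv2_nonneg (convex_Icc m M)
    · exact fun z hz => (hgdiff z (hIcc hz)).continuousAt.continuousWithinAt
    · intro z hz
      rw [interior_Icc] at hz
      exact (hgdiff z (hIcc (Ioo_subset_Icc_self hz))).differentiableWithinAt
    · intro z hz
      rw [interior_Icc] at hz
      have hz' := hIcc (Ioo_subset_Icc_self hz)
      have heq : deriv g =ᶠ[nhds z] fun w => deriv f w - k * w := by
        filter_upwards [Ioo_mem_nhds hz'.1 hz'.2] with w hw using hgderiv w hw
      have : DifferentiableAt ℝ (fun w => deriv f w - k * w) z :=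
        (hdiff2 z hz').sub (differentiableAt_id.const_mul k)
      exact (heq.differentiableAt_iff.mpr this).differentiableWithinAt
    · intro z hz
      rw [interior_Icc] at hz
      show (0:ℝ) ≤ deriv (deriv g) z
      rw [hgd2 z (hIcc (Ioo_subset_Icc_self hz))]
      have := hbk z (Ioo_subset_Icc_self hz)
      linarith
  have hdgx : deriv g x = deriv f x - k * x := hgderiv x (hIcc hx)
  rcases lt_trichotomy x t with hxt | rfl | htx
  · have h := hconv.deriv_le_slope hx ht hxt (hgdiff x (hIcc hx))
    rw [slope_def_field, hdgx] at h
    have h2 : (deriv f x - k * x) * (t - x) ≤ g t - g x :=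
      (le_div_iff₀ (by linarith : (0:ℝ) < t - x)).mp h
    simp only [hg] at h2
    nlinarith
  · simp
  · have h := hconv.slope_le_deriv ht hx htx (hgdiff x (hIcc hx))
    rw [slope_def_field, hdgx] at h
    have h2 : g x - g t ≤ (deriv f x - k * x) * (x - t) :=
      (div_le_iff₀ (by linarith : (0:ℝ) < x - t)).mp h
    simp only [hg] at h2
    nlinarith

lemma tangent_aux_upper {f : ℝ → ℝ} {a b m M K : ℝ} (ham : a < m) (hMb : M < b)
    (hdiff1 : ∀ x ∈ Set.Ioo a b, DifferentiableAt ℝ f x)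
    (hdiff2 : ∀ x ∈ Set.Ioo a b, DifferentiableAt ℝ (deriv f) x)
    (hbK : ∀ z ∈ Set.Icc m M, deriv (deriv f) z ≤ K)
    {x t : ℝ} (hx : x ∈ Set.Icc m M) (ht : t ∈ Set.Icc m M) :
    f t - f x - deriv f x * (t - x) ≤ K / 2 * (t - x) ^ 2 := by
  have hneg1 : ∀ y ∈ Set.Ioo a b, DifferentiableAt ℝ (fun z => -f z) y :=
    fun y hy => (hdiff1 y hy).neg
  have hneg2 : ∀ y ∈ Set.Ioo a b, DifferentiableAt ℝ (deriv fun z => -f z) y := by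
    intro y hy
    rw [deriv.fun_neg']
    exact (hdiff2 y hy).neg
  have hbk : ∀ z ∈ Set.Icc m M, -K ≤ deriv (deriv fun z => -f z) z := by
    intro z hz
    rw [deriv.fun_neg', show (fun x => -deriv f x) = fun x => -(deriv f) x from rfl]
    rw [deriv.fun_neg]
    linarith [hbK z hz]
  have h := tangent_aux ham hMb hneg1 hneg2 hbk hx ht
  rw [deriv.fun_neg] at h
  nlinarith [h]

theorem stmt_7 {Ω : Type*} [MeasurableSpace Ω] (P : Measure Ω) [IsProbabilityMeasure P]
    (X : Ω → ℝ) (m M : ℝ) (hmM : m < M)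
    (hX : ∀ᵐ ω ∂P, X ω ∈ Set.Icc m M)
    (hXint : Integrable X P)
    (hX2int : Integrable (fun ω => (X ω) ^ 2) P)
    (f : ℝ → ℝ) (a b : ℝ) (ham : a < m) (hMb : M < b)
    (hdiff1 : ∀ x ∈ Set.Ioo a b, DifferentiableAt ℝ f x)
    (hdiff2 : ∀ x ∈ Set.Ioo a b, DifferentiableAt ℝ (deriv f) x)
    (k K : ℝ) (hk : 0 ≤ k) (hkK : k < K)
    (hbound : ∀ z ∈ Set.Icc m M, k ≤ deriv (deriv f) z ∧ deriv (deriv f) z ≤ K)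
    (hfXint : Integrable (fun ω => f (X ω)) P)
    (hdfXint : Integrable (fun ω => deriv f (X ω)) P)
    (hXdfXint : Integrable (fun ω => X ω * deriv f (X ω)) P)
    (t : ℝ) (ht : t ∈ Set.Icc m M) :
    K / 2 * (∫ ω, (X ω - t) ^ 2 ∂P) ≥
      (∫ ω, X ω * deriv f (X ω) ∂P) - t * (∫ ω, deriv f (X ω) ∂P) + f t
        - (∫ ω, f (X ω) ∂P) ∧
    (∫ ω, X ω * deriv f (X ω) ∂P) - t * (∫ ω, deriv f (X ω) ∂P) + f t
        - (∫ ω, f (X ω) ∂P) ≥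
      k / 2 * (∫ ω, (X ω - t) ^ 2 ∂P) := by
  have hSq : Integrable (fun ω => (X ω - t) ^ 2) P := by
    have h : (fun ω => (X ω - t) ^ 2) = fun ω => X ω ^ 2 - 2 * t * X ω + t ^ 2 := by
      funext ω; ring
    rw [h]
    exact (hX2int.sub (hXint.const_mul (2 * t))).add (integrable_const _)
  have hE : Integrable (fun ω => X ω * deriv f (X ω) - t * deriv f (X ω) + f t - f (X ω)) P :=
    ((hXdfXint.sub (hdfXint.const_mul t)).add (integrable_const (f t))).sub hfXint
  have hEval : (∫ ω, (X ω * deriv f (X ω) - t * deriv f (X ω) + f t - f (X ω)) ∂P)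
      = (∫ ω, X ω * deriv f (X ω) ∂P) - t * (∫ ω, deriv f (X ω) ∂P) + f t
        - (∫ ω, f (X ω) ∂P) := by
    have e1 : (∫ ω, (X ω * deriv f (X ω) - t * deriv f (X ω) + f t - f (X ω)) ∂P)
        = (∫ ω, (X ω * deriv f (X ω) - t * deriv f (X ω) + f t) ∂P) - ∫ ω, f (X ω) ∂P :=
      integral_sub ((hXdfXint.sub (hdfXint.const_mul t)).add (integrable_const (f t))) hfXint
    have e2 : (∫ ω, (X ω * deriv f (X ω) - t * deriv f (X ω) + f t) ∂P)
        = (∫ ω, (X ω * deriv f (X ω) - t * deriv f (X ω)) ∂P) + ∫ (_ : Ω), f t ∂P :=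
      integral_add (hXdfXint.sub (hdfXint.const_mul t)) (integrable_const (f t))
    have e3 : (∫ ω, (X ω * deriv f (X ω) - t * deriv f (X ω)) ∂P)
        = (∫ ω, X ω * deriv f (X ω) ∂P) - ∫ ω, t * deriv f (X ω) ∂P :=
      integral_sub hXdfXint (hdfXint.const_mul t)
    have e4 : (∫ ω, t * deriv f (X ω) ∂P) = t * ∫ ω, deriv f (X ω) ∂P :=
      integral_const_mul t _
    rw [e1, e2, e3, e4, integral_const]
    simp
  constructor
  · rw [ge_iff_le, ← hEval,
      show K / 2 * (∫ ω, (X ω - t) ^ 2 ∂P) = ∫ ω, K / 2 * (X ω - t) ^ 2 ∂P from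
        (integral_const_mul _ _).symm]
    apply integral_mono_ae hE (hSq.const_mul _)
    filter_upwards [hX] with ω hω
    have h := tangent_aux_upper ham hMb hdiff1 hdiff2 (fun z hz => (hbound z hz).2) hω ht
    nlinarith [h]
  · rw [ge_iff_le, ← hEval,
      show k / 2 * (∫ ω, (X ω - t) ^ 2 ∂P) = ∫ ω, k / 2 * (X ω - t) ^ 2 ∂P from
        (integral_const_mul _ _).symm]
    apply integral_mono_ae (hSq.const_mul _) hE
    filter_upwards [hX] with ω hω
    have h := tangent_aux ham hMb hdiff1 hdiff2 (fun z hz => (hbound z hz).1) hω ht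
    nlinarith [h]
end

section
/- Let f be twice differentiable on an open interval containing [m, M] with k ≤ f″(z) ≤ K for all z ∈ [m, M], where K > k ≥ 0. Then (K/2)·(E[X²] − (E[X])²) ≥ E[f(X)] − f(E[X]) ≥ (k/2)·(E[X²] − (E[X])²). -/
open MeasureTheory Real

/-- First derivative of `c*x^2 + d*f(x)` on an open set where `f` is differentiable. -/
lemma aux_deriv1 {f : ℝ → ℝ} {a b : ℝ}
    (hdiff1 : ∀ x ∈ Set.Ioo a b, DifferentiableAt ℝ f x) (c d : ℝ) {x : ℝ}
    (hx : x ∈ Set.Ioo a b) :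
    deriv (fun y => c * y ^ 2 + d * f y) x = 2 * c * x + d * deriv f x := by
  have h1 : HasDerivAt (fun y : ℝ => c * y ^ 2) (c * (2 * x)) x := by
    simpa using (hasDerivAt_pow 2 x).const_mul c
  have h2 : HasDerivAt (fun y => d * f y) (d * deriv f x) x :=
    ((hdiff1 x hx).hasDerivAt).const_mul d
  have := (h1.add h2).deriv
  change deriv ((fun y => c * y ^ 2) + fun y => d * f y) x = _; rw [this]; ring

lemma aux_deriv2 {f : ℝ → ℝ} {a b : ℝ}
    (hdiff1 : ∀ x ∈ Set.Ioo a b, DifferentiableAt ℝ f x)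
    (hdiff2 : ∀ x ∈ Set.Ioo a b, DifferentiableAt ℝ (deriv f) x) (c d : ℝ) {x : ℝ}
    (hx : x ∈ Set.Ioo a b) :
    deriv (deriv (fun y => c * y ^ 2 + d * f y)) x = 2 * c + d * deriv (deriv f) x := by
  have heq : deriv (fun y => c * y ^ 2 + d * f y) =ᶠ[nhds x]
      (fun y => 2 * c * y + d * deriv f y) := by
    filter_upwards [isOpen_Ioo.mem_nhds hx] with y hy
    exact aux_deriv1 hdiff1 c d hy
  rw [heq.deriv_eq]
  have h1 : HasDerivAt (fun y : ℝ => 2 * c * y) (2 * c) x := by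
    simpa using (hasDerivAt_id x).const_mul (2 * c)
  have h2 : HasDerivAt (fun y => d * deriv f y) (d * deriv (deriv f) x) x :=
    ((hdiff2 x hx).hasDerivAt).const_mul d
  have := (h1.add h2).deriv
  change deriv ((fun y => 2 * c * y) + fun y => d * deriv f y) x = _; rw [this]

/-- Jensen-type inequality for `c*x^2 + d*f(x)` when its second derivative is nonneg. -/
lemma aux_jensen {Ω : Type*} [MeasurableSpace Ω] (P : Measure Ω) [IsProbabilityMeasure P]
    (X : Ω → ℝ) (m M : ℝ)
    (hX : ∀ᵐ ω ∂P, X ω ∈ Set.Icc m M)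
    (hXint : Integrable X P)
    (hX2int : Integrable (fun ω => (X ω) ^ 2) P)
    (f : ℝ → ℝ) (a b : ℝ) (ham : a < m) (hMb : M < b)
    (hdiff1 : ∀ x ∈ Set.Ioo a b, DifferentiableAt ℝ f x)
    (hdiff2 : ∀ x ∈ Set.Ioo a b, DifferentiableAt ℝ (deriv f) x)
    (c d : ℝ)
    (hnn : ∀ z ∈ Set.Icc m M, 0 ≤ 2 * c + d * deriv (deriv f) z)
    (hfXint : Integrable (fun ω => f (X ω)) P) :
    c * (∫ ω, X ω ∂P) ^ 2 + d * f (∫ ω, X ω ∂P) ≤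
      c * (∫ ω, (X ω) ^ 2 ∂P) + d * (∫ ω, f (X ω) ∂P) := by
  set g : ℝ → ℝ := fun y => c * y ^ 2 + d * f y with hg
  have hsub : Set.Icc m M ⊆ Set.Ioo a b := Set.Icc_subset_Ioo ham hMb
  have hint : interior (Set.Icc m M) ⊆ Set.Ioo a b := interior_subset.trans hsub
  have hgdiff : ∀ x ∈ Set.Ioo a b, DifferentiableAt ℝ g x := fun x hx =>
    ((differentiableAt_pow 2).const_mul c).add ((hdiff1 x hx).const_mul d)
  have hconv : ConvexOn ℝ (Set.Icc m M) g := by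
    apply convexOn_of_deriv2_nonneg (convex_Icc m M)
    · exact fun x hx => (hgdiff x (hsub hx)).continuousAt.continuousWithinAt
    · exact fun x hx => (hgdiff x (hint hx)).differentiableWithinAt
    · intro x hx
      have heq : deriv g =ᶠ[nhds x] (fun y => 2 * c * y + d * deriv f y) := by
        filter_upwards [isOpen_Ioo.mem_nhds (hint hx)] with y hy
        exact aux_deriv1 hdiff1 c d hy
      have hd : DifferentiableAt ℝ (fun y => 2 * c * y + d * deriv f y) x :=
        (differentiableAt_id.const_mul _).add ((hdiff2 x (hint hx)).const_mul d)
      exact (hd.congr_of_eventuallyEq heq).differentiableWithinAt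
    · intro x hx
      have : deriv^[2] g x = deriv (deriv g) x := rfl
      rw [this, aux_deriv2 hdiff1 hdiff2 c d (hint hx)]
      exact hnn x (interior_subset hx)
  have hcont : ContinuousOn g (Set.Icc m M) := fun x hx =>
    (hgdiff x (hsub hx)).continuousAt.continuousWithinAt
  have hgint : Integrable (g ∘ X) P := (hX2int.const_mul c).add (hfXint.const_mul d)
  have hjensen := hconv.map_average_le hcont isClosed_Icc hX hXint hgint
  rw [average_eq_integral, average_eq_integral] at hjensen
  have hsplit : (∫ ω, g (X ω) ∂P) = c * (∫ ω, (X ω) ^ 2 ∂P) + d * (∫ ω, f (X ω) ∂P) := by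
    simp only [hg]
    rw [integral_add (hX2int.const_mul c) (hfXint.const_mul d),
      integral_const_mul, integral_const_mul]
  rw [hsplit] at hjensen
  exact hjensen

theorem stmt_8 {Ω : Type*} [MeasurableSpace Ω] (P : Measure Ω) [IsProbabilityMeasure P]
    (X : Ω → ℝ) (m M : ℝ) (hmM : m < M)
    (hX : ∀ᵐ ω ∂P, X ω ∈ Set.Icc m M)
    (hXint : Integrable X P)
    (hX2int : Integrable (fun ω => (X ω) ^ 2) P)
    (f : ℝ → ℝ) (a b : ℝ) (ham : a < m) (hMb : M < b)
    (hdiff1 : ∀ x ∈ Set.Ioo a b, DifferentiableAt ℝ f x)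
    (hdiff2 : ∀ x ∈ Set.Ioo a b, DifferentiableAt ℝ (deriv f) x)
    (k K : ℝ) (hk : 0 ≤ k) (hkK : k < K)
    (hbound : ∀ z ∈ Set.Icc m M, k ≤ deriv (deriv f) z ∧ deriv (deriv f) z ≤ K)
    (hfXint : Integrable (fun ω => f (X ω)) P)
    (hdfXint : Integrable (fun ω => deriv f (X ω)) P)
    (hXdfXint : Integrable (fun ω => X ω * deriv f (X ω)) P)
     :
    K / 2 * ((∫ ω, (X ω) ^ 2 ∂P) - (∫ ω, X ω ∂P) ^ 2) ≥
      (∫ ω, f (X ω) ∂P) - f (∫ ω, X ω ∂P) ∧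
    (∫ ω, f (X ω) ∂P) - f (∫ ω, X ω ∂P) ≥
      k / 2 * ((∫ ω, (X ω) ^ 2 ∂P) - (∫ ω, X ω ∂P) ^ 2) := by
  have h1 := aux_jensen P X m M hX hXint hX2int f a b ham hMb hdiff1 hdiff2 (K/2) (-1)
    (fun z hz => by have := (hbound z hz).2; linarith) hfXint
  have h2 := aux_jensen P X m M hX hXint hX2int f a b ham hMb hdiff1 hdiff2 (-(k/2)) 1
    (fun z hz => by have := (hbound z hz).1; linarith) hfXint
  constructor <;> [linarith; linarith]
end

section
/- Let f be twice differentiable on an open interval containing [m, M] with k ≤ f″(z) ≤ K for all z ∈ [m, M], where K > k ≥ 0. Then (K/2)·(E[X²] − (E[X])²) ≥ E[X·f′(X)] − E[X]·E[f′(X)] + f(E[X]) − E[f(X)] ≥ (k/2)·(E[X²] − (E[X])²). -/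
open MeasureTheory Real

lemma tangent_le_aux {F : ℝ → ℝ} {S : Set ℝ} (hfc : ConvexOn ℝ S F)
    (hd : ∀ x ∈ S, DifferentiableAt ℝ F x) {x y : ℝ} (hx : x ∈ S) (hy : y ∈ S) :
    F x + deriv F x * (y - x) ≤ F y := by
  rcases lt_trichotomy x y with h | h | h
  · have h1 := hfc.deriv_le_slope hx hy h (hd x hx)
    rw [slope_def_field, div_eq_inv_mul, le_inv_mul_iff₀ (by linarith : (0:ℝ) < y - x)] at h1
    nlinarith
  · simp [h]
  · have h1 := hfc.slope_le_deriv hy hx h (hd x hx)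
    rw [slope_def_field, div_eq_inv_mul, inv_mul_le_iff₀ (by linarith : (0:ℝ) < x - y)] at h1
    nlinarith

theorem stmt_9 {Ω : Type*} [MeasurableSpace Ω] (P : Measure Ω) [IsProbabilityMeasure P]
    (X : Ω → ℝ) (m M : ℝ) (hmM : m < M)
    (hX : ∀ᵐ ω ∂P, X ω ∈ Set.Icc m M)
    (hXint : Integrable X P)
    (hX2int : Integrable (fun ω => (X ω) ^ 2) P)
    (f : ℝ → ℝ) (a b : ℝ) (ham : a < m) (hMb : M < b)
    (hdiff1 : ∀ x ∈ Set.Ioo a b, DifferentiableAt ℝ f x)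
    (hdiff2 : ∀ x ∈ Set.Ioo a b, DifferentiableAt ℝ (deriv f) x)
    (k K : ℝ) (hk : 0 ≤ k) (hkK : k < K)
    (hbound : ∀ z ∈ Set.Icc m M, k ≤ deriv (deriv f) z ∧ deriv (deriv f) z ≤ K)
    (hfXint : Integrable (fun ω => f (X ω)) P)
    (hdfXint : Integrable (fun ω => deriv f (X ω)) P)
    (hXdfXint : Integrable (fun ω => X ω * deriv f (X ω)) P)
     :
    K / 2 * ((∫ ω, (X ω) ^ 2 ∂P) - (∫ ω, X ω ∂P) ^ 2) ≥
      (∫ ω, X ω * deriv f (X ω) ∂P) - (∫ ω, X ω ∂P) * (∫ ω, deriv f (X ω) ∂P)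
        + f (∫ ω, X ω ∂P) - (∫ ω, f (X ω) ∂P) ∧
    (∫ ω, X ω * deriv f (X ω) ∂P) - (∫ ω, X ω ∂P) * (∫ ω, deriv f (X ω) ∂P)
        + f (∫ ω, X ω ∂P) - (∫ ω, f (X ω) ∂P) ≥
      k / 2 * ((∫ ω, (X ω) ^ 2 ∂P) - (∫ ω, X ω ∂P) ^ 2) := by
  set μ : ℝ := ∫ ω, X ω ∂P with hμdef
  have hsub : Set.Icc m M ⊆ Set.Ioo a b := fun x hx => ⟨lt_of_lt_of_le ham hx.1, lt_of_le_of_lt hx.2 hMb⟩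
  -- μ ∈ Icc m M
  have hμm : m ≤ μ := by
    have := integral_mono_ae (integrable_const m) hXint (hX.mono fun ω h => h.1)
    simpa using this
  have hμM : μ ≤ M := by
    have := integral_mono_ae hXint (integrable_const M) (hX.mono fun ω h => h.2)
    simpa using this
  have hμmem : μ ∈ Set.Icc m M := ⟨hμm, hμM⟩
  -- generic convexity machinery for F = f - c/2 x^2 type functions
  have tangent : ∀ c : ℝ, (∀ z ∈ Set.Icc m M, c ≤ deriv (deriv f) z) →
      ∀ x ∈ Set.Icc m M, c/2 * (μ - x)^2 ≤ f μ - f x - deriv f x * (μ - x) := by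
    intro c hc x hxmem
    set F : ℝ → ℝ := fun t => f t - c/2 * t^2 with hF
    have hFd : ∀ y ∈ Set.Ioo a b, HasDerivAt F (deriv f y - c * y) y := by
      intro y hy
      have h2 : HasDerivAt (fun t : ℝ => c/2 * t^2) (c * y) y := by
        have h := (hasDerivAt_pow 2 y).const_mul (c/2)
        convert h using 1
        · rfl
        · rfl
        push_cast
        ring
      exact (hdiff1 y hy).hasDerivAt.sub h2
    have hFderiv : ∀ y ∈ Set.Ioo a b, deriv F y = deriv f y - c * y :=
      fun y hy => (hFd y hy).deriv
    have hFd2 : ∀ z ∈ Set.Ioo a b, HasDerivAt (deriv F) (deriv (deriv f) z - c) z := by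
      intro z hz
      have heq : (fun t => deriv f t - c * t) =ᶠ[nhds z] deriv F := by
        filter_upwards [isOpen_Ioo.mem_nhds hz] with t ht
        exact (hFderiv t ht).symm
      have h : HasDerivAt (fun t => deriv f t - c * t) (deriv (deriv f) z - c) z := by
        have h2 : HasDerivAt (fun t : ℝ => c * t) c z := by
          simpa using (hasDerivAt_id z).const_mul c
        exact (hdiff2 z hz).hasDerivAt.sub h2
      exact h.congr_of_eventuallyEq heq.symm
    have hconv : ConvexOn ℝ (Set.Icc m M) F := by
      apply convexOn_of_deriv2_nonneg (convex_Icc m M)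
      · exact fun y hy => (hFd y (hsub hy)).differentiableAt.continuousAt.continuousWithinAt
      · rw [interior_Icc]
        exact fun y hy =>
          (hFd y (hsub (Set.Ioo_subset_Icc_self hy))).differentiableAt.differentiableWithinAt
      · rw [interior_Icc]
        exact fun y hy =>
          (hFd2 y (hsub (Set.Ioo_subset_Icc_self hy))).differentiableAt.differentiableWithinAt
      · rw [interior_Icc]
        intro y hy
        have h2 : deriv (deriv F) y = deriv (deriv f) y - c :=
          (hFd2 y (hsub (Set.Ioo_subset_Icc_self hy))).deriv
        have : deriv^[2] F y = deriv (deriv F) y := by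
          simp [Function.iterate_succ, Function.comp]
        rw [this, h2, sub_nonneg]
        exact hc y (Set.Ioo_subset_Icc_self hy)
    have htan := tangent_le_aux hconv
      (fun y hy => (hFd y (hsub hy)).differentiableAt) hxmem hμmem
    rw [hFderiv x (hsub hxmem)] at htan
    simp only [hF] at htan
    nlinarith [htan]
  have key_k := tangent k (fun z hz => (hbound z hz).1)
  -- K side: use f replaced appropriately by applying tangent machinery to -f with -K... instead redo:
  have tangentK : ∀ x ∈ Set.Icc m M, f μ - f x - deriv f x * (μ - x) ≤ K/2 * (μ - x)^2 := by
    intro x hxmem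
    set F : ℝ → ℝ := fun t => K/2 * t^2 - f t with hF
    have hFd : ∀ y ∈ Set.Ioo a b, HasDerivAt F (K * y - deriv f y) y := by
      intro y hy
      have h2 : HasDerivAt (fun t : ℝ => K/2 * t^2) (K * y) y := by
        have h := (hasDerivAt_pow 2 y).const_mul (K/2)
        convert h using 1
        · rfl
        · rfl
        push_cast
        ring
      exact h2.sub (hdiff1 y hy).hasDerivAt
    have hFderiv : ∀ y ∈ Set.Ioo a b, deriv F y = K * y - deriv f y :=
      fun y hy => (hFd y hy).deriv
    have hFd2 : ∀ z ∈ Set.Ioo a b, HasDerivAt (deriv F) (K - deriv (deriv f) z) z := by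
      intro z hz
      have heq : (fun t => K * t - deriv f t) =ᶠ[nhds z] deriv F := by
        filter_upwards [isOpen_Ioo.mem_nhds hz] with t ht
        exact (hFderiv t ht).symm
      have h : HasDerivAt (fun t => K * t - deriv f t) (K - deriv (deriv f) z) z := by
        have h2 : HasDerivAt (fun t : ℝ => K * t) K z := by
          simpa using (hasDerivAt_id z).const_mul K
        exact h2.sub (hdiff2 z hz).hasDerivAt
      exact h.congr_of_eventuallyEq heq.symm
    have hconv : ConvexOn ℝ (Set.Icc m M) F := by
      apply convexOn_of_deriv2_nonneg (convex_Icc m M)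
      · exact fun y hy => (hFd y (hsub hy)).differentiableAt.continuousAt.continuousWithinAt
      · rw [interior_Icc]
        exact fun y hy =>
          (hFd y (hsub (Set.Ioo_subset_Icc_self hy))).differentiableAt.differentiableWithinAt
      · rw [interior_Icc]
        exact fun y hy =>
          (hFd2 y (hsub (Set.Ioo_subset_Icc_self hy))).differentiableAt.differentiableWithinAt
      · rw [interior_Icc]
        intro y hy
        have h2 : deriv (deriv F) y = K - deriv (deriv f) y :=
          (hFd2 y (hsub (Set.Ioo_subset_Icc_self hy))).deriv
        have : deriv^[2] F y = deriv (deriv F) y := by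
          simp [Function.iterate_succ, Function.comp]
        rw [this, h2, sub_nonneg]
        exact (hbound y (Set.Ioo_subset_Icc_self hy)).2
    have htan := tangent_le_aux hconv
      (fun y hy => (hFd y (hsub hy)).differentiableAt) hxmem hμmem
    rw [hFderiv x (hsub hxmem)] at htan
    simp only [hF] at htan
    nlinarith [htan]
  -- Integrability and integral values
  have hGeq : (fun ω => f μ - f (X ω) - deriv f (X ω) * (μ - X ω))
      = fun ω => (f μ - f (X ω)) - (μ * deriv f (X ω) - X ω * deriv f (X ω)) := by
    funext ω; ring
  have hGint : Integrable (fun ω => f μ - f (X ω) - deriv f (X ω) * (μ - X ω)) P := by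
    rw [hGeq]
    exact ((integrable_const _).sub hfXint).sub ((hdfXint.const_mul μ).sub hXdfXint)
  have i1 : Integrable (fun ω => f μ - f (X ω)) P := (integrable_const (f μ)).sub hfXint
  have i2 : Integrable (fun ω => μ * deriv f (X ω) - X ω * deriv f (X ω)) P :=
    (hdfXint.const_mul μ).sub hXdfXint
  have i3 : Integrable (fun ω => μ * deriv f (X ω)) P := hdfXint.const_mul μ
  have hGval : ∫ ω, (f μ - f (X ω) - deriv f (X ω) * (μ - X ω)) ∂P
      = f μ - (∫ ω, f (X ω) ∂P) - (μ * (∫ ω, deriv f (X ω) ∂P) - ∫ ω, X ω * deriv f (X ω) ∂P) := by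
    rw [hGeq, integral_sub i1 i2, integral_sub (integrable_const (f μ)) hfXint,
      integral_sub i3 hXdfXint, integral_const, integral_const_mul]
    simp
  have hQeq : (fun ω => (μ - X ω)^2) = fun ω => (μ^2 - (2*μ) * X ω) + (X ω)^2 := by
    funext ω; ring
  have hQint : Integrable (fun ω => (μ - X ω)^2) P := by
    rw [hQeq]
    exact ((integrable_const _).sub (hXint.const_mul (2*μ))).add hX2int
  have hQval : ∫ ω, (μ - X ω)^2 ∂P = (∫ ω, (X ω)^2 ∂P) - μ^2 := by
    have j1 : Integrable (fun ω => μ^2 - (2*μ) * X ω) P :=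
      (integrable_const (μ^2)).sub (hXint.const_mul (2*μ))
    have j2 : Integrable (fun ω => (2*μ) * X ω) P := hXint.const_mul (2*μ)
    rw [hQeq, integral_add j1 hX2int,
      integral_sub (integrable_const (μ^2)) j2, integral_const,
      integral_const_mul]
    simp [← hμdef]
    ring
  -- lower bound
  have hlow : k/2 * ((∫ ω, (X ω)^2 ∂P) - μ^2) ≤ ∫ ω, (f μ - f (X ω) - deriv f (X ω) * (μ - X ω)) ∂P := by
    have h := integral_mono_ae (hQint.const_mul (k/2)) hGint
      (hX.mono fun ω hω => key_k (X ω) hω)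
    rwa [integral_const_mul, hQval] at h
  have hhigh : ∫ ω, (f μ - f (X ω) - deriv f (X ω) * (μ - X ω)) ∂P ≤ K/2 * ((∫ ω, (X ω)^2 ∂P) - μ^2) := by
    have h := integral_mono_ae hGint (hQint.const_mul (K/2))
      (hX.mono fun ω hω => tangentK (X ω) hω)
    rwa [integral_const_mul, hQval] at h
  rw [hGval] at hlow hhigh
  constructor <;> [linarith; linarith]
end

section
/- Let f be twice differentiable on an open interval containing [m, M] with k ≤ f″(z) ≤ K for all z ∈ [m, M], where K > k ≥ 0. If E[f′(X)] ≠ 0 and t* := E[X·f′(X)]/E[f′(X)] ∈ [m, M], then (K/2)·E[(X − t*)²] ≥ f′(t*)·t* − E[X]·f′(t*) − f(t*) + E[f(X)] ≥ (k/2)·E[(X − t*)²]. -/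
open MeasureTheory Real

theorem aux_lower {f : ℝ → ℝ} {a b m M k : ℝ} (ham : a < m) (hMb : M < b)
    (hdiff1 : ∀ x ∈ Set.Ioo a b, DifferentiableAt ℝ f x)
    (hdiff2 : ∀ x ∈ Set.Ioo a b, DifferentiableAt ℝ (deriv f) x)
    (hkb : ∀ z ∈ Set.Icc m M, k ≤ deriv (deriv f) z)
    {t x : ℝ} (ht : t ∈ Set.Icc m M) (hx : x ∈ Set.Icc m M) :
    k / 2 * (x - t) ^ 2 ≤ f x - f t - deriv f t * (x - t) := by
  have hsub : Set.Icc m M ⊆ Set.Ioo a b := fun y hy =>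
    ⟨lt_of_lt_of_le ham hy.1, lt_of_le_of_lt hy.2 hMb⟩
  set g : ℝ → ℝ := fun y => f y - k / 2 * y ^ 2 with hg
  have hgdiff : ∀ y ∈ Set.Ioo a b, DifferentiableAt ℝ g y := fun y hy =>
    (hdiff1 y hy).sub (by fun_prop)
  have hderivg : ∀ y ∈ Set.Ioo a b, deriv g y = deriv f y - k * y := by
    intro y hy
    rw [hg, deriv_fun_sub (hdiff1 y hy) (by fun_prop),
      deriv_const_mul _ (differentiableAt_pow 2)]
    simp [deriv_pow]
    ring
  have hconv : ConvexOn ℝ (Set.Icc m M) g := by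
    apply convexOn_of_deriv2_nonneg (convex_Icc m M)
    · exact fun y hy => ((hgdiff y (hsub hy)).continuousAt).continuousWithinAt
    · rw [interior_Icc]
      exact fun y hy => ((hgdiff y (hsub (Set.Ioo_subset_Icc_self hy))).differentiableWithinAt)
    · rw [interior_Icc]
      intro y hy
      have hyab : y ∈ Set.Ioo a b := hsub (Set.Ioo_subset_Icc_self hy)
      have heq : deriv g =ᶠ[nhds y] fun z => deriv f z - k * z :=
        Filter.eventuallyEq_of_mem (isOpen_Ioo.mem_nhds hyab) hderivg
      exact (((hdiff2 y hyab).sub (differentiableAt_fun_id.const_mul k)).congr_of_eventuallyEq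
        heq).differentiableWithinAt
    · rw [interior_Icc]
      intro y hy
      have hyab : y ∈ Set.Ioo a b := hsub (Set.Ioo_subset_Icc_self hy)
      have heq : deriv g =ᶠ[nhds y] fun z => deriv f z - k * z :=
        Filter.eventuallyEq_of_mem (isOpen_Ioo.mem_nhds hyab) hderivg
      have : deriv (deriv g) y = deriv (deriv f) y - k := by
        have hdk : deriv (fun z : ℝ => k * z) y = k := by
          simpa using ((hasDerivAt_id y).const_mul k).deriv
        rw [heq.deriv_eq, deriv_fun_sub (hdiff2 y hyab) (differentiableAt_fun_id.const_mul k), hdk]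
      have h2 : deriv^[2] g y = deriv (deriv g) y := by
        simp [Function.iterate_succ, Function.iterate_one]
      rw [h2, this]
      have := hkb y (Set.Ioo_subset_Icc_self hy)
      linarith
  have hkey : deriv g t * (x - t) ≤ g x - g t := by
    rcases lt_trichotomy t x with h | h | h
    · have hs := hconv.deriv_le_slope ht hx h (hgdiff t (hsub ht))
      rw [slope_def_field] at hs
      exact (le_div_iff₀ (by linarith)).mp hs
    · simp [h]
    · have hs := hconv.slope_le_deriv hx ht h (hgdiff t (hsub ht))
      rw [slope_def_field] at hs
      have hs' : g t - g x ≤ deriv g t * (t - x) := (div_le_iff₀ (by linarith)).mp hs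
      have hr : deriv g t * (x - t) = -(deriv g t * (t - x)) := by ring
      linarith
  have hdg : deriv g t = deriv f t - k * t := hderivg t (hsub ht)
  rw [hdg] at hkey
  simp only [hg] at hkey
  nlinarith [hkey]

theorem stmt_11 {Ω : Type*} [MeasurableSpace Ω] (P : Measure Ω) [IsProbabilityMeasure P]
    (X : Ω → ℝ) (m M : ℝ) (hmM : m < M)
    (hX : ∀ᵐ ω ∂P, X ω ∈ Set.Icc m M)
    (hXint : Integrable X P)
    (hX2int : Integrable (fun ω => (X ω) ^ 2) P)
    (f : ℝ → ℝ) (a b : ℝ) (ham : a < m) (hMb : M < b)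
    (hdiff1 : ∀ x ∈ Set.Ioo a b, DifferentiableAt ℝ f x)
    (hdiff2 : ∀ x ∈ Set.Ioo a b, DifferentiableAt ℝ (deriv f) x)
    (k K : ℝ) (hk : 0 ≤ k) (hkK : k < K)
    (hbound : ∀ z ∈ Set.Icc m M, k ≤ deriv (deriv f) z ∧ deriv (deriv f) z ≤ K)
    (hfXint : Integrable (fun ω => f (X ω)) P)
    (hdfXint : Integrable (fun ω => deriv f (X ω)) P)
    (hXdfXint : Integrable (fun ω => X ω * deriv f (X ω)) P)
    (hne : (∫ ω, deriv f (X ω) ∂P) ≠ 0)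
    (hts : (∫ ω, X ω * deriv f (X ω) ∂P) / (∫ ω, deriv f (X ω) ∂P) ∈ Set.Icc m M) :
    let ts := (∫ ω, X ω * deriv f (X ω) ∂P) / (∫ ω, deriv f (X ω) ∂P)
    K / 2 * (∫ ω, (X ω - ts) ^ 2 ∂P) ≥
      deriv f ts * ts - (∫ ω, X ω ∂P) * deriv f ts - f ts + (∫ ω, f (X ω) ∂P) ∧
    deriv f ts * ts - (∫ ω, X ω ∂P) * deriv f ts - f ts + (∫ ω, f (X ω) ∂P) ≥
      k / 2 * (∫ ω, (X ω - ts) ^ 2 ∂P) := by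
  intro ts
  have htts : ts ∈ Set.Icc m M := hts
  -- derivative facts for -f
  have hnegderiv : deriv (fun y => -f y) = fun y => -(deriv f y) := by
    funext y; exact deriv.neg
  have hdiff1' : ∀ x ∈ Set.Ioo a b, DifferentiableAt ℝ (fun y => -f y) x :=
    fun x hx => (hdiff1 x hx).neg
  have hdiff2' : ∀ x ∈ Set.Ioo a b, DifferentiableAt ℝ (deriv (fun y => -f y)) x := by
    intro x hx; rw [hnegderiv]; exact (hdiff2 x hx).neg
  have hK' : ∀ z ∈ Set.Icc m M, -K ≤ deriv (deriv (fun y => -f y)) z := by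
    intro z hz
    rw [hnegderiv]
    have : deriv (fun y => -(deriv f y)) z = -(deriv (deriv f) z) := deriv.neg
    rw [this]
    linarith [(hbound z hz).2]
  -- pointwise bounds
  have hlow : ∀ x ∈ Set.Icc m M,
      k / 2 * (x - ts) ^ 2 ≤ f x - f ts - deriv f ts * (x - ts) :=
    fun x hx => aux_lower ham hMb hdiff1 hdiff2 (fun z hz => (hbound z hz).1) htts hx
  have hup : ∀ x ∈ Set.Icc m M,
      f x - f ts - deriv f ts * (x - ts) ≤ K / 2 * (x - ts) ^ 2 := by
    intro x hx
    have := aux_lower ham hMb hdiff1' hdiff2' hK' htts hx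
    rw [hnegderiv] at this
    simp only at this
    nlinarith [this]
  -- integrability
  have hsq : Integrable (fun ω => (X ω - ts) ^ 2) P := by
    have : (fun ω => (X ω - ts) ^ 2) = fun ω => X ω ^ 2 - 2 * ts * X ω + ts ^ 2 := by
      funext ω; ring
    rw [this]
    exact (hX2int.sub ((hXint.const_mul (2 * ts)))).add (integrable_const _)
  have hmid : Integrable (fun ω => f (X ω) - f ts - deriv f ts * (X ω - ts)) P :=
    (hfXint.sub (integrable_const _)).sub ((hXint.sub (integrable_const ts)).const_mul _)
  -- integral inequalities
  have h1 : ∫ ω, k / 2 * (X ω - ts) ^ 2 ∂P ≤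
      ∫ ω, (f (X ω) - f ts - deriv f ts * (X ω - ts)) ∂P := by
    apply integral_mono_ae (hsq.const_mul _) hmid
    filter_upwards [hX] with ω hω
    exact hlow (X ω) hω
  have h2 : (∫ ω, (f (X ω) - f ts - deriv f ts * (X ω - ts)) ∂P) ≤
      ∫ ω, K / 2 * (X ω - ts) ^ 2 ∂P := by
    apply integral_mono_ae hmid (hsq.const_mul _)
    filter_upwards [hX] with ω hω
    exact hup (X ω) hω
  have e1 : ∫ ω, k / 2 * (X ω - ts) ^ 2 ∂P = k / 2 * ∫ ω, (X ω - ts) ^ 2 ∂P :=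
    integral_const_mul _ _
  have e2 : ∫ ω, K / 2 * (X ω - ts) ^ 2 ∂P = K / 2 * ∫ ω, (X ω - ts) ^ 2 ∂P :=
    integral_const_mul _ _
  have e3 : (∫ ω, (f (X ω) - f ts - deriv f ts * (X ω - ts)) ∂P) =
      (∫ ω, f (X ω) ∂P) - f ts - deriv f ts * ((∫ ω, X ω ∂P) - ts) := by
    have hc : Integrable (fun ω => f ts + deriv f ts * (X ω - ts)) P :=
      (integrable_const _).add ((hXint.sub (integrable_const ts)).const_mul _)
    simp only [sub_sub]
    have hmul : Integrable (fun ω => deriv f ts * (X ω - ts)) P := by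
      have := (hXint.sub (integrable_const ts)).const_mul (deriv f ts)
      simpa using this
    rw [integral_sub hfXint hc, integral_add (integrable_const _) hmul,
      integral_const_mul, integral_sub hXint (integrable_const ts)]
    simp
  rw [e1] at h1
  rw [e2] at h2
  rw [e3] at h1 h2
  constructor
  · nlinarith [h2]
  · nlinarith [h1]
end

section
/- Let f be twice differentiable on an open interval containing [m, M] with k ≤ f″(z) ≤ K for all z ∈ [m, M], where K > k ≥ 0. Then (K/4)·[(M − m)²/12 + E[(X − (m + M)/2)²]] ≥ (1/2)·[E[f(X)] + ((M − E[X])·f(M) + (E[X] − m)·f(m))/(M − m)] − (1/(M − m))·∫_m^M f(t) dt ≥ (k/4)·[(M − m)²/12 + E[(X − (m + M)/2)²]]. -/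
open MeasureTheory Real intervalIntegral

/-- Trapezoid inequality for convex functions. -/
lemma trap {m M : ℝ} {g : ℝ → ℝ} (hconv : ConvexOn ℝ (Set.Icc m M) g)
    (hgc : ContinuousOn g (Set.Icc m M)) {p q : ℝ} (hmp : m ≤ p) (hpq : p ≤ q) (hqM : q ≤ M) :
    ∫ t in p..q, g t ≤ (q - p) * (g p + g q) / 2 := by
  rcases eq_or_lt_of_le hpq with rfl | hpq'
  · simp
  have hqp : 0 < q - p := by linarith
  set c1 : ℝ := (g q - g p) / (q - p) with hc1
  set c0 : ℝ := (g p * q - g q * p) / (q - p) with hc0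
  have hpmem : p ∈ Set.Icc m M := ⟨hmp, le_trans hpq hqM⟩
  have hqmem : q ∈ Set.Icc m M := ⟨le_trans hmp hpq, hqM⟩
  have hchord : ∀ t ∈ Set.Icc p q, g t ≤ c0 + c1 * t := by
    intro t ht
    have ha : (0:ℝ) ≤ (q - t) / (q - p) := by
      apply div_nonneg <;> [linarith [ht.2]; linarith]
    have hb : (0:ℝ) ≤ (t - p) / (q - p) := by
      apply div_nonneg <;> [linarith [ht.1]; linarith]
    have hab : (q - t) / (q - p) + (t - p) / (q - p) = 1 := by
      field_simp
      ring
    have ht' : ((q - t) / (q - p)) • p + ((t - p) / (q - p)) • q = t := by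
      simp only [smul_eq_mul]
      field_simp
      ring
    have h2 := hconv.2 hpmem hqmem ha hb hab
    rw [ht'] at h2
    have heq : ((q - t) / (q - p)) • g p + ((t - p) / (q - p)) • g q = c0 + c1 * t := by
      rw [smul_eq_mul, smul_eq_mul, hc0, hc1]
      field_simp
      ring
    linarith [heq ▸ h2]
  have hint1 : IntervalIntegrable g volume p q :=
    (hgc.mono (Set.Icc_subset_Icc hmp hqM)).intervalIntegrable_of_Icc hpq
  have hintc : IntervalIntegrable (fun t => c1 * t) volume p q :=
    (continuous_const.mul continuous_id).intervalIntegrable _ _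
  have hint2 : IntervalIntegrable (fun t => c0 + c1 * t) volume p q :=
    intervalIntegrable_const.add hintc
  calc ∫ t in p..q, g t ≤ ∫ t in p..q, (c0 + c1 * t) :=
        integral_mono_on hpq hint1 hint2 hchord
    _ = c0 * (q - p) + c1 * ((q ^ 2 - p ^ 2) / 2) := by
        rw [integral_add intervalIntegrable_const hintc, intervalIntegral.integral_const,
          intervalIntegral.integral_const_mul, integral_id]
        simp [smul_eq_mul]
        ring
    _ = (q - p) * (g p + g q) / 2 := by
        rw [hc0, hc1]; field_simp; ring

lemma key {Ω : Type*} [MeasurableSpace Ω] (P : Measure Ω) [IsProbabilityMeasure P]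
    (X : Ω → ℝ) (m M : ℝ) (hmM : m < M)
    (hX : ∀ᵐ ω ∂P, X ω ∈ Set.Icc m M) (hXint : Integrable X P)
    (g : ℝ → ℝ) (hgc : ContinuousOn g (Set.Icc m M)) (hconv : ConvexOn ℝ (Set.Icc m M) g)
    (hgXint : Integrable (fun ω => g (X ω)) P) :
    (1 / (M - m)) * ∫ t in m..M, g t ≤
      (1 / 2) * ((∫ ω, g (X ω) ∂P) +
        ((M - (∫ ω, X ω ∂P)) * g M + ((∫ ω, X ω ∂P) - m) * g m) / (M - m)) := by
  have hMm : (0:ℝ) < M - m := by linarith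
  set J : ℝ := ∫ t in m..M, g t with hJ
  set c1 : ℝ := (g m - g M) / (2 * (M - m)) with hc1
  set c0 : ℝ := (M * g M - m * g m) / (2 * (M - m)) - J / (M - m) with hc0
  have hpt : ∀ x ∈ Set.Icc m M, 0 ≤ (1/2) * g x + (c1 * x + c0) := by
    intro x hx
    have h1 : ∫ t in m..x, g t ≤ (x - m) * (g m + g x) / 2 :=
      trap hconv hgc le_rfl hx.1 hx.2
    have h2 : ∫ t in x..M, g t ≤ (M - x) * (g x + g M) / 2 :=
      trap hconv hgc hx.1 hx.2 le_rfl
    have hi1 : IntervalIntegrable g volume m x :=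
      (hgc.mono (Set.Icc_subset_Icc le_rfl hx.2)).intervalIntegrable_of_Icc hx.1
    have hi2 : IntervalIntegrable g volume x M :=
      (hgc.mono (Set.Icc_subset_Icc hx.1 le_rfl)).intervalIntegrable_of_Icc hx.2
    have hsplit : (∫ t in m..x, g t) + ∫ t in x..M, g t = J :=
      integral_add_adjacent_intervals hi1 hi2
    have hJle : J ≤ ((M - m) * g x + (x - m) * g m + (M - x) * g M) / 2 := by
      rw [← hsplit]; linarith
    have hexp : (1/2) * g x + (c1 * x + c0)
        = (((M - m) * g x + (x - m) * g m + (M - x) * g M) / 2 - J) / (M - m) := by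
      rw [hc1, hc0]
      field_simp
      ring
    rw [hexp]
    apply div_nonneg _ (le_of_lt hMm)
    linarith
  have h0 : 0 ≤ ∫ ω, ((1/2) * g (X ω) + (c1 * X ω + c0)) ∂P := by
    apply MeasureTheory.integral_nonneg_of_ae
    filter_upwards [hX] with ω hω
    exact hpt _ hω
  have hint2 : Integrable (fun ω => c1 * X ω + c0) P :=
    (hXint.const_mul c1).add (integrable_const c0)
  rw [integral_add (hgXint.const_mul (1/2)) hint2, integral_add (hXint.const_mul c1)
    (integrable_const c0), MeasureTheory.integral_const_mul, MeasureTheory.integral_const_mul,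
    MeasureTheory.integral_const] at h0
  simp only [measure_univ, ENNReal.toReal_one, one_smul, smul_eq_mul] at h0
  rw [hc1, hc0] at h0
  simp only [probReal_univ, one_mul] at h0
  have hgoal : (1 / 2) * ((∫ ω, g (X ω) ∂P) +
        ((M - (∫ ω, X ω ∂P)) * g M + ((∫ ω, X ω ∂P) - m) * g m) / (M - m))
      - (1 / (M - m)) * J
      = 1 / 2 * ∫ ω, g (X ω) ∂P +
        ((g m - g M) / (2 * (M - m)) * ∫ ω, X ω ∂P +
          ((M * g M - m * g m) / (2 * (M - m)) - J / (M - m))) := by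
    field_simp
    ring
  linarith [hgoal, h0]

lemma conv_aux (f : ℝ → ℝ) {a b m M : ℝ} (C : ℝ) (ham : a < m) (hMb : M < b)
    (hdiff1 : ∀ x ∈ Set.Ioo a b, DifferentiableAt ℝ f x)
    (hdiff2 : ∀ x ∈ Set.Ioo a b, DifferentiableAt ℝ (deriv f) x)
    (hC : ∀ z ∈ Set.Icc m M, deriv (deriv f) z ≤ C) :
    ConvexOn ℝ (Set.Icc m M) (fun x => C / 2 * x ^ 2 - f x) := by
  have hsub : Set.Icc m M ⊆ Set.Ioo a b :=
    fun x hx => ⟨lt_of_lt_of_le ham hx.1, lt_of_le_of_lt hx.2 hMb⟩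
  have hsub' : Set.Ioo m M ⊆ Set.Ioo a b :=
    fun x hx => ⟨lt_trans ham hx.1, lt_trans hx.2 hMb⟩
  have hg' : ∀ x ∈ Set.Ioo a b, HasDerivAt (fun x => C / 2 * x ^ 2 - f x) (C * x - deriv f x) x := by
    intro x hx
    have h1 : HasDerivAt (fun x : ℝ => C / 2 * x ^ 2) (C * x) x := by
      have := (hasDerivAt_pow 2 x).const_mul (C / 2)
      exact this.congr_deriv (by ring)
    exact h1.sub (hdiff1 x hx).hasDerivAt
  have hEq : Set.EqOn (deriv (fun x => C / 2 * x ^ 2 - f x)) (fun x => C * x - deriv f x)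
      (Set.Ioo a b) := fun x hx => (hg' x hx).deriv
  apply convexOn_of_deriv2_nonneg (convex_Icc m M)
  · intro x hx
    exact ((hg' x (hsub hx)).differentiableAt.continuousAt).continuousWithinAt
  · rw [interior_Icc]
    exact fun x hx => (hg' x (hsub' hx)).differentiableAt.differentiableWithinAt
  · rw [interior_Icc]
    intro x hx
    have hev : deriv (fun x => C / 2 * x ^ 2 - f x) =ᶠ[nhds x] (fun x => C * x - deriv f x) :=
      Filter.eventuallyEq_of_mem (isOpen_Ioo.mem_nhds (hsub' hx)) hEq
    have hd : DifferentiableAt ℝ (fun x => C * x - deriv f x) x :=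
      (differentiableAt_id.const_mul C).sub (hdiff2 x (hsub' hx))
    exact (hd.congr_of_eventuallyEq hev).differentiableWithinAt
  · rw [interior_Icc]
    intro x hx
    have hev : deriv (fun x => C / 2 * x ^ 2 - f x) =ᶠ[nhds x] (fun x => C * x - deriv f x) :=
      Filter.eventuallyEq_of_mem (isOpen_Ioo.mem_nhds (hsub' hx)) hEq
    have h2 : HasDerivAt (fun x => C * x - deriv f x) (C - deriv (deriv f) x) x := by
      have h3 : HasDerivAt (fun y : ℝ => C * y) (C * 1) x := (hasDerivAt_id x).const_mul C
      have := h3.sub (hdiff2 x (hsub' hx)).hasDerivAt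
      exact this.congr_deriv (by ring)
    have hder2 : deriv^[2] (fun x => C / 2 * x ^ 2 - f x) x = C - deriv (deriv f) x := by
      show deriv (deriv fun x => C / 2 * x ^ 2 - f x) x = _
      rw [hev.deriv_eq]
      exact h2.deriv
    rw [hder2]
    have := hC x ⟨le_of_lt hx.1, le_of_lt hx.2⟩
    linarith

set_option maxHeartbeats 1000000 in
theorem stmt_12 {Ω : Type*} [MeasurableSpace Ω] (P : Measure Ω) [IsProbabilityMeasure P]
    (X : Ω → ℝ) (m M : ℝ) (hmM : m < M)
    (hX : ∀ᵐ ω ∂P, X ω ∈ Set.Icc m M)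
    (hXint : Integrable X P)
    (hX2int : Integrable (fun ω => (X ω) ^ 2) P)
    (f : ℝ → ℝ) (a b : ℝ) (ham : a < m) (hMb : M < b)
    (hdiff1 : ∀ x ∈ Set.Ioo a b, DifferentiableAt ℝ f x)
    (hdiff2 : ∀ x ∈ Set.Ioo a b, DifferentiableAt ℝ (deriv f) x)
    (k K : ℝ) (hk : 0 ≤ k) (hkK : k < K)
    (hbound : ∀ z ∈ Set.Icc m M, k ≤ deriv (deriv f) z ∧ deriv (deriv f) z ≤ K)
    (hfXint : Integrable (fun ω => f (X ω)) P)
    (hdfXint : Integrable (fun ω => deriv f (X ω)) P)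
    (hXdfXint : Integrable (fun ω => X ω * deriv f (X ω)) P)
     :
    K / 4 * ((M - m) ^ 2 / 12 + (∫ ω, (X ω - (m + M) / 2) ^ 2 ∂P)) ≥
      (1 / 2) * ((∫ ω, f (X ω) ∂P) +
          ((M - (∫ ω, X ω ∂P)) * f M + ((∫ ω, X ω ∂P) - m) * f m) / (M - m))
        - (1 / (M - m)) * ∫ t in m..M, f t ∧
    (1 / 2) * ((∫ ω, f (X ω) ∂P) +
          ((M - (∫ ω, X ω ∂P)) * f M + ((∫ ω, X ω ∂P) - m) * f m) / (M - m))
        - (1 / (M - m)) * ∫ t in m..M, f t ≥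
      k / 4 * ((M - m) ^ 2 / 12 + (∫ ω, (X ω - (m + M) / 2) ^ 2 ∂P)) := by
  have hMm : (0:ℝ) < M - m := by linarith
  have hMmne : M - m ≠ 0 := ne_of_gt hMm
  have hsub : Set.Icc m M ⊆ Set.Ioo a b :=
    fun x hx => ⟨lt_of_lt_of_le ham hx.1, lt_of_le_of_lt hx.2 hMb⟩
  have hfc : ContinuousOn f (Set.Icc m M) :=
    fun x hx => ((hdiff1 x (hsub hx)).continuousAt).continuousWithinAt
  have hJfint : IntervalIntegrable f volume m M :=
    hfc.intervalIntegrable_of_Icc (le_of_lt hmM)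
  have hsqc : Continuous (fun x : ℝ => (K:ℝ) / 2 * x ^ 2) := by continuity
  have hsqc' : Continuous (fun x : ℝ => (-k:ℝ) / 2 * x ^ 2) := by continuity
  -- second moment rewrite
  have hsq : (∫ ω, (X ω - (m + M) / 2) ^ 2 ∂P)
      = (∫ ω, (X ω) ^ 2 ∂P) - (m + M) * (∫ ω, X ω ∂P) + ((m + M) / 2) ^ 2 := by
    have hfe : (fun ω => (X ω - (m + M) / 2) ^ 2)
        = fun ω => ((X ω) ^ 2 - (m + M) * X ω + ((m + M) / 2) ^ 2) := by
      funext ω; ring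
    have hA : Integrable (fun ω => (X ω) ^ 2 - (m + M) * X ω) P :=
      hX2int.sub (hXint.const_mul _)
    rw [hfe, integral_add hA (integrable_const _),
      integral_sub hX2int (hXint.const_mul _), MeasureTheory.integral_const_mul,
      MeasureTheory.integral_const]
    simp [measure_univ]
  -- upper bound: g₁ = K/2 x² − f convex
  have hconv1 : ConvexOn ℝ (Set.Icc m M) (fun x => K / 2 * x ^ 2 - f x) :=
    conv_aux f K ham hMb hdiff1 hdiff2 (fun z hz => (hbound z hz).2)
  have hg1c : ContinuousOn (fun x => K / 2 * x ^ 2 - f x) (Set.Icc m M) :=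
    (hsqc.continuousOn).sub hfc
  have hg1Xint : Integrable (fun ω => K / 2 * (X ω) ^ 2 - f (X ω)) P :=
    (hX2int.const_mul (K / 2)).sub hfXint
  have hkey1 := key P X m M hmM hX hXint (fun x => K / 2 * x ^ 2 - f x) hg1c hconv1 hg1Xint
  have hInt1 : (∫ ω, (K / 2 * (X ω) ^ 2 - f (X ω)) ∂P)
      = K / 2 * (∫ ω, (X ω) ^ 2 ∂P) - (∫ ω, f (X ω) ∂P) := by
    rw [integral_sub (hX2int.const_mul _) hfXint, MeasureTheory.integral_const_mul]
  have hJ1 : (∫ t in m..M, (K / 2 * t ^ 2 - f t))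
      = K / 2 * ((M ^ 3 - m ^ 3) / 3) - ∫ t in m..M, f t := by
    rw [integral_sub (hsqc.intervalIntegrable _ _) hJfint, intervalIntegral.integral_const_mul, integral_pow]
    norm_num
  rw [hInt1, hJ1] at hkey1
  -- lower bound: g₂ = f − k/2 x² convex (apply conv_aux to −f with C = −k)
  have hnegderiv : deriv (fun x => -f x) = fun x => -deriv f x := funext fun x => deriv.neg
  have hconv2 : ConvexOn ℝ (Set.Icc m M) (fun x => f x - k / 2 * x ^ 2) := by
    have h := conv_aux (fun x => -f x) (-k) ham hMb
      (fun x hx => (hdiff1 x hx).neg)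
      (by rw [hnegderiv]; exact fun x hx => (hdiff2 x hx).neg)
      (by
        rw [hnegderiv]
        intro z hz
        have hne : deriv (fun x => -deriv f x) z = -(deriv (deriv f) z) := deriv.neg
        rw [hne]
        linarith [(hbound z hz).1])
    have he : (fun x : ℝ => (-k) / 2 * x ^ 2 - -f x) = fun x => f x - k / 2 * x ^ 2 := by
      funext x; ring
    rwa [he] at h
  have hg2c : ContinuousOn (fun x => f x - k / 2 * x ^ 2) (Set.Icc m M) :=
    hfc.sub (continuous_const.mul (continuous_pow 2)).continuousOn
  have hg2Xint : Integrable (fun ω => f (X ω) - k / 2 * (X ω) ^ 2) P :=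
    hfXint.sub (hX2int.const_mul (k / 2))
  have hkey2 := key P X m M hmM hX hXint (fun x => f x - k / 2 * x ^ 2) hg2c hconv2 hg2Xint
  have hInt2 : (∫ ω, (f (X ω) - k / 2 * (X ω) ^ 2) ∂P)
      = (∫ ω, f (X ω) ∂P) - k / 2 * (∫ ω, (X ω) ^ 2 ∂P) := by
    rw [integral_sub hfXint (hX2int.const_mul _), MeasureTheory.integral_const_mul]
  have hJ2 : (∫ t in m..M, (f t - k / 2 * t ^ 2))
      = (∫ t in m..M, f t) - k / 2 * ((M ^ 3 - m ^ 3) / 3) := by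
    rw [integral_sub (g := fun t : ℝ => k / 2 * t ^ 2) hJfint ((continuous_const.mul (continuous_pow 2)).intervalIntegrable _ _),
      intervalIntegral.integral_const_mul, integral_pow]
    norm_num
  rw [hInt2, hJ2] at hkey2
  set I1 : ℝ := ∫ ω, X ω ∂P
  set I2 : ℝ := ∫ ω, (X ω) ^ 2 ∂P
  set IF : ℝ := ∫ ω, f (X ω) ∂P
  set Jf : ℝ := ∫ t in m..M, f t
  rw [hsq]
  constructor
  · have hid : K / 4 * ((M - m) ^ 2 / 12 + (I2 - (m + M) * I1 + ((m + M) / 2) ^ 2))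
        - ((1 / 2) * (IF + ((M - I1) * f M + (I1 - m) * f m) / (M - m)) - (1 / (M - m)) * Jf)
        = (1 / 2) * ((K / 2 * I2 - IF) +
            ((M - I1) * (K / 2 * M ^ 2 - f M) + (I1 - m) * (K / 2 * m ^ 2 - f m)) / (M - m))
          - (1 / (M - m)) * (K / 2 * ((M ^ 3 - m ^ 3) / 3) - Jf) := by
      field_simp
      ring
    linarith [hkey1, hid]
  · have hid : ((1 / 2) * (IF + ((M - I1) * f M + (I1 - m) * f m) / (M - m)) - (1 / (M - m)) * Jf)
        - k / 4 * ((M - m) ^ 2 / 12 + (I2 - (m + M) * I1 + ((m + M) / 2) ^ 2))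
        = (1 / 2) * ((IF - k / 2 * I2) +
            ((M - I1) * (f M - k / 2 * M ^ 2) + (I1 - m) * (f m - k / 2 * m ^ 2)) / (M - m))
          - (1 / (M - m)) * (Jf - k / 2 * ((M ^ 3 - m ^ 3) / 3)) := by
      field_simp
      ring
    linarith [hkey2, hid]
end

section
/- Let f be twice differentiable on an open interval containing [m, M] with k ≤ f″(z) ≤ K for all z ∈ [m, M], where K > k ≥ 0. Then (K/2)·[(M − m)²/12 + E[(X − (m + M)/2)²]] ≥ (1/(M − m))·∫_m^M f(z) dz − E[f(X)] − ((m + M)/2)·E[f′(X)] + E[X·f′(X)] ≥ (k/2)·[(M − m)²/12 + E[(X − (m + M)/2)²]]. -/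
open MeasureTheory Real

lemma tangent_le {S : Set ℝ} {g : ℝ → ℝ} (hg : ConvexOn ℝ S g) {x y : ℝ}
    (hx : x ∈ S) (hy : y ∈ S) (hd : DifferentiableAt ℝ g x) :
    g x + deriv g x * (y - x) ≤ g y := by
  rcases lt_trichotomy x y with h | h | h
  · have h1 := hg.deriv_le_slope hx hy h hd
    rw [slope_def_field] at h1
    have h2 : 0 < y - x := by linarith
    have h3 := (le_div_iff₀ h2).mp h1
    linarith
  · subst h; simp
  · have h1 := hg.slope_le_deriv hy hx h hd
    rw [slope_def_field] at h1
    have h2 : 0 < x - y := by linarith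
    have h3 := (div_le_iff₀ h2).mp h1
    linarith

lemma key_lemma {Ω : Type*} [MeasurableSpace Ω] (P : Measure Ω) [IsProbabilityMeasure P]
    (X : Ω → ℝ) (m M : ℝ) (hmM : m < M)
    (hX : ∀ᵐ ω ∂P, X ω ∈ Set.Icc m M)
    (g : ℝ → ℝ) (a b : ℝ) (ham : a < m) (hMb : M < b)
    (hd1 : ∀ x ∈ Set.Ioo a b, DifferentiableAt ℝ g x)
    (hd2 : ∀ x ∈ Set.Ioo a b, DifferentiableAt ℝ (deriv g) x)
    (hg2 : ∀ z ∈ Set.Icc m M, 0 ≤ deriv (deriv g) z)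
    (hgX : Integrable (fun ω => g (X ω)) P)
    (hdgX : Integrable (fun ω => deriv g (X ω)) P)
    (hXdgX : Integrable (fun ω => X ω * deriv g (X ω)) P) :
    (∫ ω, g (X ω) ∂P) + (m + M) / 2 * (∫ ω, deriv g (X ω) ∂P)
      - (∫ ω, X ω * deriv g (X ω) ∂P) ≤ (1 / (M - m)) * ∫ z in m..M, g z := by
  have hMm : (0:ℝ) < M - m := by linarith
  have hsub : Set.Icc m M ⊆ Set.Ioo a b := fun z hz => ⟨by linarith [hz.1], by linarith [hz.2]⟩
  have hcont : ContinuousOn g (Set.Icc m M) :=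
    fun z hz => ((hd1 z (hsub hz)).continuousAt).continuousWithinAt
  have hconv : ConvexOn ℝ (Set.Icc m M) g := by
    apply convexOn_of_deriv2_nonneg (convex_Icc m M) hcont
    · intro z hz
      rw [interior_Icc] at hz
      exact ((hd1 z (hsub (Set.Ioo_subset_Icc_self hz))).differentiableWithinAt)
    · intro z hz
      rw [interior_Icc] at hz
      exact ((hd2 z (hsub (Set.Ioo_subset_Icc_self hz))).differentiableWithinAt)
    · intro z hz
      rw [interior_Icc] at hz
      simpa [Function.iterate_succ, Function.iterate_zero, Function.comp] using hg2 z (Set.Ioo_subset_Icc_self hz)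
  have hgint : IntervalIntegrable g volume m M := by
    apply ContinuousOn.intervalIntegrable
    rwa [Set.uIcc_of_le hmM.le]
  have hpt : ∀ x ∈ Set.Icc m M,
      g x + (m + M) / 2 * deriv g x - x * deriv g x ≤ (1 / (M - m)) * ∫ z in m..M, g z := by
    intro x hx
    have haff : IntervalIntegrable (fun y => g x + deriv g x * (y - x)) volume m M := by
      have hc : Continuous (fun y => g x + deriv g x * (y - x)) := by continuity
      exact hc.intervalIntegrable m M
    have hmono := intervalIntegral.integral_mono_on hmM.le haff hgint
      (fun y hy => tangent_le hconv hx hy (hd1 x (hsub hx)))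
    have hcalc : (∫ y in m..M, (g x + deriv g x * (y - x)))
        = (M - m) * (g x + (m + M) / 2 * deriv g x - x * deriv g x) := by
      have heq : (fun y => g x + deriv g x * (y - x))
          = fun y => deriv g x * y + (g x - deriv g x * x) := by funext y; ring
      have hc2 : Continuous (fun y : ℝ => deriv g x * y) := by continuity
      rw [heq, intervalIntegral.integral_add (hc2.intervalIntegrable m M)
          intervalIntegrable_const,
        intervalIntegral.integral_const_mul, integral_id, intervalIntegral.integral_const,
        smul_eq_mul]
      ring
    rw [hcalc] at hmono
    rw [one_div, inv_mul_eq_div, le_div_iff₀ hMm]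
    linarith
  have hae : ∀ᵐ ω ∂P, g (X ω) + (m + M) / 2 * deriv g (X ω) - X ω * deriv g (X ω)
      ≤ (1 / (M - m)) * ∫ z in m..M, g z := by
    filter_upwards [hX] with ω hω using hpt (X ω) hω
  have hint : Integrable
      (fun ω => g (X ω) + (m + M) / 2 * deriv g (X ω) - X ω * deriv g (X ω)) P :=
    (hgX.add (hdgX.const_mul _)).sub hXdgX
  have hint2 : Integrable (fun ω => g (X ω) + (m + M) / 2 * deriv g (X ω)) P := by
    exact hgX.add (hdgX.const_mul _)
  have hfinal := integral_mono_ae hint (integrable_const _) hae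
  rwa [integral_sub hint2 hXdgX, integral_add hgX (hdgX.const_mul _),
    integral_const_mul, integral_const, probReal_univ, one_smul] at hfinal

theorem stmt_13 {Ω : Type*} [MeasurableSpace Ω] (P : Measure Ω) [IsProbabilityMeasure P]
    (X : Ω → ℝ) (m M : ℝ) (hmM : m < M)
    (hX : ∀ᵐ ω ∂P, X ω ∈ Set.Icc m M)
    (hXint : Integrable X P)
    (hX2int : Integrable (fun ω => (X ω) ^ 2) P)
    (f : ℝ → ℝ) (a b : ℝ) (ham : a < m) (hMb : M < b)
    (hdiff1 : ∀ x ∈ Set.Ioo a b, DifferentiableAt ℝ f x)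
    (hdiff2 : ∀ x ∈ Set.Ioo a b, DifferentiableAt ℝ (deriv f) x)
    (k K : ℝ) (hk : 0 ≤ k) (hkK : k < K)
    (hbound : ∀ z ∈ Set.Icc m M, k ≤ deriv (deriv f) z ∧ deriv (deriv f) z ≤ K)
    (hfXint : Integrable (fun ω => f (X ω)) P)
    (hdfXint : Integrable (fun ω => deriv f (X ω)) P)
    (hXdfXint : Integrable (fun ω => X ω * deriv f (X ω)) P)
     :
    K / 2 * ((M - m) ^ 2 / 12 + (∫ ω, (X ω - (m + M) / 2) ^ 2 ∂P)) ≥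
      (1 / (M - m)) * (∫ z in m..M, f z) - (∫ ω, f (X ω) ∂P)
        - ((m + M) / 2) * (∫ ω, deriv f (X ω) ∂P) + (∫ ω, X ω * deriv f (X ω) ∂P) ∧
    (1 / (M - m)) * (∫ z in m..M, f z) - (∫ ω, f (X ω) ∂P)
        - ((m + M) / 2) * (∫ ω, deriv f (X ω) ∂P) + (∫ ω, X ω * deriv f (X ω) ∂P) ≥
      k / 2 * ((M - m) ^ 2 / 12 + (∫ ω, (X ω - (m + M) / 2) ^ 2 ∂P)) := by
  have hMm : (0:ℝ) < M - m := by linarith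
  have hsub : Set.Icc m M ⊆ Set.Ioo a b := fun z hz => ⟨by linarith [hz.1], by linarith [hz.2]⟩
  -- generic facts for g_c = fun z => f z - c/2 * z^2, handled for c = k and c = -K (sign flip)
  -- we prove an auxiliary claim for any real c with c ≤ f'' on Icc, then use c = k and (-(f) with...)...
  have main : ∀ c : ℝ, (∀ z ∈ Set.Icc m M, c ≤ deriv (deriv f) z) →
      (1 / (M - m)) * (∫ z in m..M, f z) - (∫ ω, f (X ω) ∂P)
        - ((m + M) / 2) * (∫ ω, deriv f (X ω) ∂P) + (∫ ω, X ω * deriv f (X ω) ∂P) ≥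
      c / 2 * ((M - m) ^ 2 / 12 + (∫ ω, (X ω - (m + M) / 2) ^ 2 ∂P)) := by
    intro c hc
    set g : ℝ → ℝ := fun z => f z - c / 2 * z ^ 2 with hgdef
    have hq : ∀ x : ℝ, DifferentiableAt ℝ (fun z : ℝ => c / 2 * z ^ 2) x := by
      intro x; fun_prop
    have hgd1 : ∀ x ∈ Set.Ioo a b, DifferentiableAt ℝ g x :=
      fun x hx => (hdiff1 x hx).sub (hq x)
    have hgderiv : ∀ x ∈ Set.Ioo a b, deriv g x = deriv f x - c * x := by
      intro x hx
      rw [hgdef, deriv_fun_sub (hdiff1 x hx) (hq x), deriv_const_mul _ (differentiableAt_pow 2),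
        deriv_pow_field]
      push_cast; ring
    have hgev : ∀ x ∈ Set.Ioo a b, deriv g =ᶠ[nhds x] fun z => deriv f z - c * z := by
      intro x hx
      filter_upwards [isOpen_Ioo.mem_nhds hx] with y hy using hgderiv y hy
    have hlin : ∀ x : ℝ, DifferentiableAt ℝ (fun z : ℝ => c * z) x := by
      intro x; fun_prop
    have hgd2 : ∀ x ∈ Set.Ioo a b, DifferentiableAt ℝ (deriv g) x := by
      intro x hx
      exact ((hdiff2 x hx).sub (hlin x)).congr_of_eventuallyEq (hgev x hx)
    have hgdd : ∀ z ∈ Set.Icc m M, 0 ≤ deriv (deriv g) z := by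
      intro z hz
      have hz' := hsub hz
      rw [(hgev z hz').deriv_eq, deriv_fun_sub (hdiff2 z hz') (hlin z)]
      have : deriv (fun z : ℝ => c * z) z = c := by
        simpa using ((hasDerivAt_id z).const_mul c).deriv
      rw [this]
      linarith [hc z hz]
    -- integrabilities
    have int1 : Integrable (fun ω => g (X ω)) P := by
      exact hfXint.sub (hX2int.const_mul (c / 2))
    have hae2 : (fun ω => deriv f (X ω) - c * X ω) =ᵐ[P] fun ω => deriv g (X ω) := by
      filter_upwards [hX] with ω hω using (hgderiv (X ω) (hsub hω)).symm
    have int2 : Integrable (fun ω => deriv g (X ω)) P :=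
      (hdfXint.sub (hXint.const_mul c)).congr hae2
    have hae3 : (fun ω => X ω * deriv f (X ω) - c * X ω ^ 2) =ᵐ[P]
        fun ω => X ω * deriv g (X ω) := by
      filter_upwards [hX] with ω hω
      rw [hgderiv (X ω) (hsub hω)]; ring
    have int3 : Integrable (fun ω => X ω * deriv g (X ω)) P :=
      (hXdfXint.sub (hX2int.const_mul c)).congr hae3
    have hA := key_lemma P X m M hmM hX g a b ham hMb hgd1 hgd2 hgdd int1 int2 int3
    -- rewrite integrals in terms of f
    have e1 : (∫ ω, g (X ω) ∂P) = (∫ ω, f (X ω) ∂P) - c / 2 * ∫ ω, (X ω) ^ 2 ∂P := by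
      rw [hgdef]
      rw [integral_sub hfXint (hX2int.const_mul (c / 2)), integral_const_mul]
    have e2 : (∫ ω, deriv g (X ω) ∂P)
        = (∫ ω, deriv f (X ω) ∂P) - c * ∫ ω, X ω ∂P := by
      rw [integral_congr_ae hae2.symm, integral_sub hdfXint (hXint.const_mul c),
        integral_const_mul]
    have e3 : (∫ ω, X ω * deriv g (X ω) ∂P)
        = (∫ ω, X ω * deriv f (X ω) ∂P) - c * ∫ ω, (X ω) ^ 2 ∂P := by
      rw [integral_congr_ae hae3.symm, integral_sub hXdfXint (hX2int.const_mul c),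
        integral_const_mul]
    have hfint : IntervalIntegrable f volume m M := by
      apply ContinuousOn.intervalIntegrable
      rw [Set.uIcc_of_le hmM.le]
      exact fun z hz => ((hdiff1 z (hsub hz)).continuousAt).continuousWithinAt
    have e4 : (∫ z in m..M, g z)
        = (∫ z in m..M, f z) - c / 2 * ((M ^ 3 - m ^ 3) / 3) := by
      rw [hgdef]
      have hc2 : Continuous (fun z : ℝ => c / 2 * z ^ 2) := by fun_prop
      rw [intervalIntegral.integral_sub hfint (hc2.intervalIntegrable m M),
        intervalIntegral.integral_const_mul, integral_pow]
      norm_num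
    have e5 : (∫ ω, (X ω - (m + M) / 2) ^ 2 ∂P)
        = (∫ ω, (X ω) ^ 2 ∂P) - (m + M) * (∫ ω, X ω ∂P) + ((m + M) / 2) ^ 2 := by
      have heq : (fun ω => (X ω - (m + M) / 2) ^ 2)
          = fun ω => ((X ω) ^ 2 - (m + M) * X ω) + ((m + M) / 2) ^ 2 := by
        funext ω; ring
      have hsi : Integrable (fun ω => X ω ^ 2 - (m + M) * X ω) P := by
        exact hX2int.sub (hXint.const_mul _)
      rw [heq, integral_add hsi (integrable_const _),
        integral_sub hX2int (hXint.const_mul _), integral_const_mul, integral_const,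
        probReal_univ, one_smul]
    have e6 : (1 / (M - m)) * (c / 2 * ((M ^ 3 - m ^ 3) / 3))
        = c / 2 * ((M - m) ^ 2 / 12 + ((m + M) / 2) ^ 2) := by
      field_simp
      ring
    rw [e1, e2, e3, e4] at hA
    rw [mul_sub] at hA
    rw [ge_iff_le, e5]
    nlinarith [hA, e6]
  refine ⟨?_, main k (fun z hz => (hbound z hz).1)⟩
  -- K side
  set g : ℝ → ℝ := fun z => K / 2 * z ^ 2 - f z with hgdef
  have hq : ∀ x : ℝ, DifferentiableAt ℝ (fun z : ℝ => K / 2 * z ^ 2) x := by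
    intro x; fun_prop
  have hgd1 : ∀ x ∈ Set.Ioo a b, DifferentiableAt ℝ g x :=
    fun x hx => (hq x).sub (hdiff1 x hx)
  have hgderiv : ∀ x ∈ Set.Ioo a b, deriv g x = K * x - deriv f x := by
    intro x hx
    rw [hgdef, deriv_fun_sub (hq x) (hdiff1 x hx), deriv_const_mul _ (differentiableAt_pow 2),
      deriv_pow_field]
    push_cast; ring
  have hgev : ∀ x ∈ Set.Ioo a b, deriv g =ᶠ[nhds x] fun z => K * z - deriv f z := by
    intro x hx
    filter_upwards [isOpen_Ioo.mem_nhds hx] with y hy using hgderiv y hy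
  have hlin : ∀ x : ℝ, DifferentiableAt ℝ (fun z : ℝ => K * z) x := by
    intro x; fun_prop
  have hgd2 : ∀ x ∈ Set.Ioo a b, DifferentiableAt ℝ (deriv g) x := by
    intro x hx
    exact ((hlin x).sub (hdiff2 x hx)).congr_of_eventuallyEq (hgev x hx)
  have hgdd : ∀ z ∈ Set.Icc m M, 0 ≤ deriv (deriv g) z := by
    intro z hz
    have hz' := hsub hz
    rw [(hgev z hz').deriv_eq, deriv_fun_sub (hlin z) (hdiff2 z hz')]
    have : deriv (fun z : ℝ => K * z) z = K := by
      simpa using ((hasDerivAt_id z).const_mul K).deriv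
    rw [this]
    linarith [(hbound z hz).2]
  have int1 : Integrable (fun ω => g (X ω)) P := by
    exact (hX2int.const_mul (K / 2)).sub hfXint
  have hae2 : (fun ω => K * X ω - deriv f (X ω)) =ᵐ[P] fun ω => deriv g (X ω) := by
    filter_upwards [hX] with ω hω using (hgderiv (X ω) (hsub hω)).symm
  have int2 : Integrable (fun ω => deriv g (X ω)) P :=
    ((hXint.const_mul K).sub hdfXint).congr hae2
  have hae3 : (fun ω => K * X ω ^ 2 - X ω * deriv f (X ω)) =ᵐ[P]
      fun ω => X ω * deriv g (X ω) := by
    filter_upwards [hX] with ω hω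
    rw [hgderiv (X ω) (hsub hω)]; ring
  have int3 : Integrable (fun ω => X ω * deriv g (X ω)) P :=
    ((hX2int.const_mul K).sub hXdfXint).congr hae3
  have hA := key_lemma P X m M hmM hX g a b ham hMb hgd1 hgd2 hgdd int1 int2 int3
  have e1 : (∫ ω, g (X ω) ∂P) = K / 2 * (∫ ω, (X ω) ^ 2 ∂P) - ∫ ω, f (X ω) ∂P := by
    rw [hgdef]
    rw [integral_sub (hX2int.const_mul (K / 2)) hfXint, integral_const_mul]
  have e2 : (∫ ω, deriv g (X ω) ∂P)
      = K * (∫ ω, X ω ∂P) - ∫ ω, deriv f (X ω) ∂P := by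
    rw [integral_congr_ae hae2.symm, integral_sub (hXint.const_mul K) hdfXint,
      integral_const_mul]
  have e3 : (∫ ω, X ω * deriv g (X ω) ∂P)
      = K * (∫ ω, (X ω) ^ 2 ∂P) - ∫ ω, X ω * deriv f (X ω) ∂P := by
    rw [integral_congr_ae hae3.symm, integral_sub (hX2int.const_mul K) hXdfXint,
      integral_const_mul]
  have hfint : IntervalIntegrable f volume m M := by
    apply ContinuousOn.intervalIntegrable
    rw [Set.uIcc_of_le hmM.le]
    exact fun z hz => ((hdiff1 z (hsub hz)).continuousAt).continuousWithinAt
  have e4 : (∫ z in m..M, g z)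
      = K / 2 * ((M ^ 3 - m ^ 3) / 3) - ∫ z in m..M, f z := by
    rw [hgdef]
    have hc2 : Continuous (fun z : ℝ => K / 2 * z ^ 2) := by fun_prop
    rw [intervalIntegral.integral_sub (hc2.intervalIntegrable m M) hfint,
      intervalIntegral.integral_const_mul, integral_pow]
    norm_num
  have e5 : (∫ ω, (X ω - (m + M) / 2) ^ 2 ∂P)
      = (∫ ω, (X ω) ^ 2 ∂P) - (m + M) * (∫ ω, X ω ∂P) + ((m + M) / 2) ^ 2 := by
    have heq : (fun ω => (X ω - (m + M) / 2) ^ 2)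
        = fun ω => ((X ω) ^ 2 - (m + M) * X ω) + ((m + M) / 2) ^ 2 := by
      funext ω; ring
    have hsi : Integrable (fun ω => X ω ^ 2 - (m + M) * X ω) P := by
      exact hX2int.sub (hXint.const_mul _)
    rw [heq, integral_add hsi (integrable_const _),
      integral_sub hX2int (hXint.const_mul _), integral_const_mul, integral_const,
      probReal_univ, one_smul]
  have e6 : (1 / (M - m)) * (K / 2 * ((M ^ 3 - m ^ 3) / 3))
      = K / 2 * ((M - m) ^ 2 / 12 + ((m + M) / 2) ^ 2) := by
    field_simp
    ring
  rw [e1, e2, e3, e4] at hA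
  rw [mul_sub] at hA
  rw [ge_iff_le, e5]
  nlinarith [hA, e6]
end

section
/- Let f be twice differentiable on an open interval containing [m, M] with k ≤ f″(z) ≤ K for all z ∈ [m, M], where K > k ≥ 0. Then for every z ∈ [m, M]: (K/4)·[(M − m)²/12 + (z − (m + M)/2)²] ≥ (1/2)·[f(z) + ((M − z)·f(M) + (z − m)·f(m))/(M − m)] − (1/(M − m))·∫_m^M f(t) dt ≥ (k/4)·[(M − m)²/12 + (z − (m + M)/2)²]. -/
open MeasureTheory Real intervalIntegral

lemma hh_right {h : ℝ → ℝ} {p q : ℝ} (hpq : p ≤ q)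
    (hc : ConvexOn ℝ (Set.Icc p q) h) (hct : ContinuousOn h (Set.Icc p q)) :
    ∫ t in p..q, h t ≤ (q - p) * (h p + h q) / 2 := by
  rcases eq_or_lt_of_le hpq with rfl | hlt
  · simp
  have hd : (0:ℝ) < q - p := by linarith
  have hint : IntervalIntegrable h volume p q := by
    apply ContinuousOn.intervalIntegrable
    rwa [Set.uIcc_of_le hpq]
  set c1 : ℝ := (h q - h p) / (q - p) with hc1
  set c0 : ℝ := (q * h p - p * h q) / (q - p) with hc0
  have hle : ∀ t ∈ Set.Icc p q, h t ≤ c1 * t + c0 := by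
    intro t ht
    have ha : 0 ≤ (q - t) / (q - p) := by
      apply div_nonneg _ hd.le; linarith [ht.2]
    have hb : 0 ≤ (t - p) / (q - p) := by
      apply div_nonneg _ hd.le; linarith [ht.1]
    have hab : (q - t) / (q - p) + (t - p) / (q - p) = 1 := by
      field_simp; ring
    have := hc.2 (Set.left_mem_Icc.2 hpq) (Set.right_mem_Icc.2 hpq) ha hb hab
    simp only [smul_eq_mul] at this
    have ht' : (q - t) / (q - p) * p + (t - p) / (q - p) * q = t := by
      field_simp; ring
    rw [ht'] at this
    refine this.trans_eq ?_
    rw [hc1, hc0]; field_simp; ring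
  have hcont : Continuous fun t : ℝ => c1 * t + c0 := by continuity
  have hmono := intervalIntegral.integral_mono_on hpq hint
    (hcont.intervalIntegrable p q) hle
  refine hmono.trans_eq ?_
  rw [intervalIntegral.integral_add ((Continuous.intervalIntegrable
      (by continuity : Continuous fun u : ℝ => c1 * u)) p q)
    (intervalIntegrable_const), intervalIntegral.integral_const_mul, integral_id,
    intervalIntegral.integral_const]
  rw [hc1, hc0, smul_eq_mul]; field_simp; ring

/-- HH on two adjacent subintervals, for any continuous convex function on [m,M]. -/
lemma hh_split {h : ℝ → ℝ} {m M z : ℝ} (hmz : m ≤ z) (hzM : z ≤ M)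
    (hc : ConvexOn ℝ (Set.Icc m M) h) (hct : ContinuousOn h (Set.Icc m M)) :
    ∫ t in m..M, h t ≤
      (z - m) * (h m + h z) / 2 + (M - z) * (h z + h M) / 2 := by
  have h1s : Set.Icc m z ⊆ Set.Icc m M := Set.Icc_subset_Icc le_rfl hzM
  have h2s : Set.Icc z M ⊆ Set.Icc m M := Set.Icc_subset_Icc hmz le_rfl
  have hi1 : IntervalIntegrable h volume m z := by
    apply ContinuousOn.intervalIntegrable
    rw [Set.uIcc_of_le hmz]; exact hct.mono h1s
  have hi2 : IntervalIntegrable h volume z M := by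
    apply ContinuousOn.intervalIntegrable
    rw [Set.uIcc_of_le hzM]; exact hct.mono h2s
  have hsplit := intervalIntegral.integral_add_adjacent_intervals hi1 hi2
  rw [← hsplit]
  exact add_le_add (hh_right hmz (hc.subset h1s (convex_Icc _ _)) (hct.mono h1s))
    (hh_right hzM (hc.subset h2s (convex_Icc _ _)) (hct.mono h2s))

theorem stmt_14 (f : ℝ → ℝ) (m M : ℝ) (hmM : m < M)
    (a b : ℝ) (ham : a < m) (hMb : M < b)
    (hdiff1 : ∀ x ∈ Set.Ioo a b, DifferentiableAt ℝ f x)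
    (hdiff2 : ∀ x ∈ Set.Ioo a b, DifferentiableAt ℝ (deriv f) x)
    (k K : ℝ) (hk : 0 ≤ k) (hkK : k < K)
    (hbound : ∀ z ∈ Set.Icc m M, k ≤ deriv (deriv f) z ∧ deriv (deriv f) z ≤ K) :
    ∀ z ∈ Set.Icc m M,
      K / 4 * ((M - m) ^ 2 / 12 + (z - (m + M) / 2) ^ 2) ≥
        (1 / 2) * (f z + ((M - z) * f M + (z - m) * f m) / (M - m))
          - (1 / (M - m)) * ∫ t in m..M, f t ∧
      (1 / 2) * (f z + ((M - z) * f M + (z - m) * f m) / (M - m))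
          - (1 / (M - m)) * ∫ t in m..M, f t ≥
        k / 4 * ((M - m) ^ 2 / 12 + (z - (m + M) / 2) ^ 2) := by
  intro z hz
  obtain ⟨hmz, hzM⟩ := hz
  have hd : (0:ℝ) < M - m := by linarith
  have hsub : Set.Icc m M ⊆ Set.Ioo a b := fun x hx => ⟨by linarith [hx.1], by linarith [hx.2]⟩
  have hsub' : Set.Ioo m M ⊆ Set.Ioo a b := Set.Subset.trans Set.Ioo_subset_Icc_self hsub
  have hcontf : ContinuousOn f (Set.Icc m M) :=
    fun x hx => ((hdiff1 x (hsub hx)).continuousAt).continuousWithinAt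
  -- convexity of f - c*t^2 type functions
  have hconv : ∀ c : ℝ, (∀ x ∈ Set.Icc m M, c ≤ deriv (deriv f) x) →
      ConvexOn ℝ (Set.Icc m M) (fun t => f t - c / 2 * t ^ 2) := by
    intro c hc
    apply convexOn_of_hasDerivWithinAt2_nonneg (convex_Icc m M)
      (f' := fun t => deriv f t - c * t) (f'' := fun t => deriv (deriv f) t - c)
    · exact fun x hx => ((hcontf x hx).sub
        ((continuous_const.mul (continuous_pow 2)).continuousOn x hx))
    · intro x hx
      rw [interior_Icc] at hx
      have h1 : HasDerivAt f (deriv f x) x := (hdiff1 x (hsub' hx)).hasDerivAt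
      have h2 : HasDerivAt (fun t : ℝ => c / 2 * t ^ 2) (c / 2 * (2 * x ^ 1)) x :=
        (hasDerivAt_pow 2 x).const_mul (c / 2)
      have := h1.sub h2
      have he : deriv f x - c / 2 * (2 * x ^ 1) = deriv f x - c * x := by ring
      rw [he] at this
      exact this.hasDerivWithinAt
    · intro x hx
      rw [interior_Icc] at hx
      have h1 : HasDerivAt (deriv f) (deriv (deriv f) x) x :=
        (hdiff2 x (hsub' hx)).hasDerivAt
      have h2 : HasDerivAt (fun t : ℝ => c * t) c x := by
        simpa using (hasDerivAt_id x).const_mul c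
      exact (h1.sub h2).hasDerivWithinAt
    · intro x hx
      rw [interior_Icc] at hx
      have := hc x (Set.Ioo_subset_Icc_self hx)
      linarith
  have hconvK : ConvexOn ℝ (Set.Icc m M) (fun t => K / 2 * t ^ 2 - f t) := by
    apply convexOn_of_hasDerivWithinAt2_nonneg (convex_Icc m M)
      (f' := fun t => K * t - deriv f t) (f'' := fun t => K - deriv (deriv f) t)
    · exact fun x hx => (((continuous_const.mul (continuous_pow 2)).continuousOn x hx).sub
        (hcontf x hx))
    · intro x hx
      rw [interior_Icc] at hx
      have h1 : HasDerivAt f (deriv f x) x := (hdiff1 x (hsub' hx)).hasDerivAt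
      have h2 : HasDerivAt (fun t : ℝ => K / 2 * t ^ 2) (K / 2 * (2 * x ^ 1)) x :=
        (hasDerivAt_pow 2 x).const_mul (K / 2)
      have := h2.sub h1
      have he : K / 2 * (2 * x ^ 1) - deriv f x = K * x - deriv f x := by ring
      rw [he] at this
      exact this.hasDerivWithinAt
    · intro x hx
      rw [interior_Icc] at hx
      have h1 : HasDerivAt (deriv f) (deriv (deriv f) x) x :=
        (hdiff2 x (hsub' hx)).hasDerivAt
      have h2 : HasDerivAt (fun t : ℝ => K * t) K x := by
        simpa using (hasDerivAt_id x).const_mul K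
      exact (h2.sub h1).hasDerivWithinAt
    · intro x hx
      rw [interior_Icc] at hx
      have := (hbound x (Set.Ioo_subset_Icc_self hx)).2
      linarith
  have hconvk : ConvexOn ℝ (Set.Icc m M) (fun t => f t - k / 2 * t ^ 2) :=
    hconv k (fun x hx => (hbound x hx).1)
  -- continuity
  have hcq : ContinuousOn (fun t : ℝ => t ^ 2) (Set.Icc m M) := (continuous_pow 2).continuousOn
  have hct1 : ContinuousOn (fun t => f t - k / 2 * t ^ 2) (Set.Icc m M) :=
    hcontf.sub (continuousOn_const.mul hcq)
  have hct2 : ContinuousOn (fun t => K / 2 * t ^ 2 - f t) (Set.Icc m M) :=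
    (continuousOn_const.mul hcq).sub hcontf
  -- integrals
  have hif : IntervalIntegrable f volume m M := by
    apply ContinuousOn.intervalIntegrable
    rwa [Set.uIcc_of_le hmM.le]
  have hiq : IntervalIntegrable (fun t : ℝ => k / 2 * t ^ 2) volume m M :=
    (Continuous.intervalIntegrable (continuous_const.mul (continuous_pow 2)) m M)
  have hiQ : IntervalIntegrable (fun t : ℝ => K / 2 * t ^ 2) volume m M :=
    (Continuous.intervalIntegrable (continuous_const.mul (continuous_pow 2)) m M)
  have hpow : ∫ t in m..M, (t : ℝ) ^ 2 = (M ^ 3 - m ^ 3) / 3 := by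
    rw [integral_pow]; norm_num
  have hint1 : ∫ t in m..M, (f t - k / 2 * t ^ 2) =
      (∫ t in m..M, f t) - k / 2 * ((M ^ 3 - m ^ 3) / 3) := by
    rw [intervalIntegral.integral_sub hif hiq, intervalIntegral.integral_const_mul, hpow]
  have hint2 : ∫ t in m..M, (K / 2 * t ^ 2 - f t) =
      K / 2 * ((M ^ 3 - m ^ 3) / 3) - ∫ t in m..M, f t := by
    rw [intervalIntegral.integral_sub hiQ hif, intervalIntegral.integral_const_mul, hpow]
  have key1 := hh_split hmz hzM hconvk hct1
  have key2 := hh_split hmz hzM hconvK hct2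
  rw [hint1] at key1
  rw [hint2] at key2
  set I : ℝ := ∫ t in m..M, f t
  constructor
  · rw [ge_iff_le, ← sub_nonneg]
    have heq : K / 4 * ((M - m) ^ 2 / 12 + (z - (m + M) / 2) ^ 2) -
        ((1 / 2) * (f z + ((M - z) * f M + (z - m) * f m) / (M - m)) - (1 / (M - m)) * I) =
        (1 / (M - m)) * ((K / 4 * ((M - m) ^ 2 / 12 + (z - (m + M) / 2) ^ 2)) * (M - m) -
          ((1 / 2) * ((M - m) * f z + (M - z) * f M + (z - m) * f m) - I)) := by
      field_simp; ring
    rw [heq]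
    apply mul_nonneg (by positivity)
    nlinarith [key2]
  · rw [ge_iff_le, ← sub_nonneg]
    have heq : (1 / 2) * (f z + ((M - z) * f M + (z - m) * f m) / (M - m)) - (1 / (M - m)) * I -
        k / 4 * ((M - m) ^ 2 / 12 + (z - (m + M) / 2) ^ 2) =
        (1 / (M - m)) * (((1 / 2) * ((M - m) * f z + (M - z) * f M + (z - m) * f m) - I) -
          (k / 4 * ((M - m) ^ 2 / 12 + (z - (m + M) / 2) ^ 2)) * (M - m)) := by
      field_simp; ring
    rw [heq]
    apply mul_nonneg (by positivity)
    nlinarith [key1]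
end

section
/- Let f be twice differentiable on an open interval containing [m, M] with k ≤ f″(z) ≤ K for all z ∈ [m, M], where K > k ≥ 0. Then for every t ∈ [m, M]: (K/2)·[(M − m)²/12 + (t − (m + M)/2)²] ≥ (1/(M − m))·∫_m^M f(z) dz − f(t) − ((m + M)/2 − t)·f′(t) ≥ (k/2)·[(M − m)²/12 + (t − (m + M)/2)²]. -/
open MeasureTheory Real

private lemma aux_taylor_lb (f : ℝ → ℝ) (a b m M k : ℝ) (ham : a < m) (hMb : M < b)
    (hd1 : ∀ x ∈ Set.Ioo a b, DifferentiableAt ℝ f x)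
    (hd2 : ∀ x ∈ Set.Ioo a b, DifferentiableAt ℝ (deriv f) x)
    (hbound : ∀ z ∈ Set.Icc m M, k ≤ deriv (deriv f) z)
    (t : ℝ) (ht : t ∈ Set.Icc m M) (z : ℝ) (hz : z ∈ Set.Icc m M) :
    k * (z - t) ^ 2 / 2 ≤ f z - f t - (z - t) * deriv f t := by
  have sub : Set.Icc m M ⊆ Set.Ioo a b := fun x hx =>
    ⟨lt_of_lt_of_le ham hx.1, lt_of_le_of_lt hx.2 hMb⟩
  set g : ℝ → ℝ := fun x => f x - f t - (x - t) * deriv f t - k * (x - t) ^ 2 / 2 with hgdef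
  set φ : ℝ → ℝ := fun x => deriv f x - deriv f t - k * (x - t) with hφdef
  have hg : ∀ x ∈ Set.Ioo a b, HasDerivAt g (φ x) x := by
    intro x hx
    have h1 := (hd1 x hx).hasDerivAt
    have h2 : HasDerivAt (fun y : ℝ => (y - t) * deriv f t) (deriv f t) x := by
      simpa using ((hasDerivAt_id x).sub_const t).mul_const (deriv f t)
    have h3 : HasDerivAt (fun y : ℝ => k * (y - t) ^ 2 / 2) (k * (x - t)) x := by
      have := (((hasDerivAt_id x).sub_const t).pow 2).const_mul k
      have := this.div_const 2
      refine this.congr_deriv ?_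
      simp
      ring
    have := ((h1.sub_const (f t)).sub h2).sub h3
    exact this
  have hφd : ∀ x ∈ Set.Ioo a b, HasDerivAt φ (deriv (deriv f) x - k) x := by
    intro x hx
    have h1 := (hd2 x hx).hasDerivAt
    have h2 : HasDerivAt (fun y : ℝ => k * (y - t)) k x := by
      simpa using ((hasDerivAt_id x).sub_const t).const_mul k
    exact (h1.sub_const (deriv f t)).sub h2
  -- φ is monotone on Icc m M
  have hφmono : MonotoneOn φ (Set.Icc m M) := by
    apply monotoneOn_of_deriv_nonneg (convex_Icc m M)
    · intro x hx; exact (hφd x (sub hx)).differentiableAt.continuousAt.continuousWithinAt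
    · intro x hx
      rw [interior_Icc] at hx
      exact ((hφd x (sub (Set.Ioo_subset_Icc_self hx))).differentiableAt).differentiableWithinAt
    · intro x hx
      rw [interior_Icc] at hx
      have hx' := Set.Ioo_subset_Icc_self hx
      rw [(hφd x (sub hx')).deriv]
      have := hbound x hx'
      linarith
  have hφt : φ t = 0 := by simp [hφdef]
  have hgt : g t = 0 := by simp [hgdef]
  have hgcont : ∀ x ∈ Set.Icc m M, ContinuousWithinAt g (Set.Icc m M) x := fun x hx =>
    (hg x (sub hx)).differentiableAt.continuousAt.continuousWithinAt
  have key : 0 ≤ g z := by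
    rcases le_total t z with htz | hzt
    · have hmono : MonotoneOn g (Set.Icc t z) := by
        have hsub : Set.Icc t z ⊆ Set.Icc m M := Set.Icc_subset_Icc ht.1 hz.2
        apply monotoneOn_of_deriv_nonneg (convex_Icc t z)
        · exact fun x hx => (hgcont x (hsub hx)).mono hsub
        · intro x hx
          rw [interior_Icc] at hx
          exact (hg x (sub (hsub (Set.Ioo_subset_Icc_self hx)))).differentiableAt.differentiableWithinAt
        · intro x hx
          rw [interior_Icc] at hx
          have hx' := hsub (Set.Ioo_subset_Icc_self hx)
          rw [(hg x (sub hx')).deriv]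
          have := hφmono ht hx' (le_of_lt hx.1)
          rw [hφt] at this; exact this
      have := hmono (Set.left_mem_Icc.2 htz) (Set.right_mem_Icc.2 htz) htz
      rwa [hgt] at this
    · have hmono : AntitoneOn g (Set.Icc z t) := by
        have hsub : Set.Icc z t ⊆ Set.Icc m M := Set.Icc_subset_Icc hz.1 ht.2
        apply antitoneOn_of_deriv_nonpos (convex_Icc z t)
        · exact fun x hx => (hgcont x (hsub hx)).mono hsub
        · intro x hx
          rw [interior_Icc] at hx
          exact (hg x (sub (hsub (Set.Ioo_subset_Icc_self hx)))).differentiableAt.differentiableWithinAt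
        · intro x hx
          rw [interior_Icc] at hx
          have hx' := hsub (Set.Ioo_subset_Icc_self hx)
          rw [(hg x (sub hx')).deriv]
          have := hφmono hx' ht (le_of_lt hx.2)
          rw [hφt] at this; exact this
      have := hmono (Set.left_mem_Icc.2 hzt) (Set.right_mem_Icc.2 hzt) hzt
      rwa [hgt] at this
  simp only [hgdef] at key
  linarith

private lemma aux_taylor_ub (f : ℝ → ℝ) (a b m M K : ℝ) (ham : a < m) (hMb : M < b)
    (hd1 : ∀ x ∈ Set.Ioo a b, DifferentiableAt ℝ f x)
    (hd2 : ∀ x ∈ Set.Ioo a b, DifferentiableAt ℝ (deriv f) x)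
    (hbound : ∀ z ∈ Set.Icc m M, deriv (deriv f) z ≤ K)
    (t : ℝ) (ht : t ∈ Set.Icc m M) (z : ℝ) (hz : z ∈ Set.Icc m M) :
    f z - f t - (z - t) * deriv f t ≤ K * (z - t) ^ 2 / 2 := by
  have hneg : deriv (fun x => -f x) = fun x => -deriv f x := by
    funext x; exact deriv.neg
  have h := aux_taylor_lb (fun x => -f x) a b m M (-K) ham hMb
    (fun x hx => (hd1 x hx).neg)
    (by rw [hneg]; exact fun x hx => (hd2 x hx).neg)
    (by
      intro w hw
      rw [hneg]
      have : deriv (fun x => -deriv f x) w = -deriv (deriv f) w := deriv.neg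
      rw [this]
      linarith [hbound w hw])
    t ht z hz
  rw [hneg] at h
  simp only at h
  linarith

theorem stmt_15 (f : ℝ → ℝ) (m M : ℝ) (hmM : m < M)
    (a b : ℝ) (ham : a < m) (hMb : M < b)
    (hdiff1 : ∀ x ∈ Set.Ioo a b, DifferentiableAt ℝ f x)
    (hdiff2 : ∀ x ∈ Set.Ioo a b, DifferentiableAt ℝ (deriv f) x)
    (k K : ℝ) (hk : 0 ≤ k) (hkK : k < K)
    (hbound : ∀ z ∈ Set.Icc m M, k ≤ deriv (deriv f) z ∧ deriv (deriv f) z ≤ K) :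
    ∀ t ∈ Set.Icc m M,
      K / 2 * ((M - m) ^ 2 / 12 + (t - (m + M) / 2) ^ 2) ≥
        (1 / (M - m)) * (∫ z in m..M, f z) - f t - ((m + M) / 2 - t) * deriv f t ∧
      (1 / (M - m)) * (∫ z in m..M, f z) - f t - ((m + M) / 2 - t) * deriv f t ≥
        k / 2 * ((M - m) ^ 2 / 12 + (t - (m + M) / 2) ^ 2) := by
  intro t ht
  have hMm : (0:ℝ) < M - m := by linarith
  have sub : Set.Icc m M ⊆ Set.Ioo a b := fun x hx =>
    ⟨lt_of_lt_of_le ham hx.1, lt_of_le_of_lt hx.2 hMb⟩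
  have huIcc : Set.uIcc m M = Set.Icc m M := Set.uIcc_of_le hmM.le
  have hfint : IntervalIntegrable f volume m M := by
    apply ContinuousOn.intervalIntegrable
    rw [huIcc]
    exact fun x hx => (hdiff1 x (sub hx)).continuousAt.continuousWithinAt
  have hcint : ∀ c : ℝ, IntervalIntegrable
      (fun z => f t + (z - t) * deriv f t + c * (z - t) ^ 2 / 2) volume m M := by
    intro c
    apply Continuous.intervalIntegrable
    fun_prop
  -- integral computations
  have I1 : (∫ z in m..M, (z - t)) = ((M - t) ^ 2 - (m - t) ^ 2) / 2 := by
    have := intervalIntegral.integral_comp_sub_right (a := m) (b := M) (fun z => z) t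
    rw [this, integral_id]
  have I2 : (∫ z in m..M, (z - t) ^ 2) = ((M - t) ^ 3 - (m - t) ^ 3) / 3 := by
    have := intervalIntegral.integral_comp_sub_right (a := m) (b := M) (fun z => z ^ 2) t
    rw [this, integral_pow]
    norm_num
  have IP : ∀ c : ℝ, (∫ z in m..M, (f t + (z - t) * deriv f t + c * (z - t) ^ 2 / 2)) =
      (M - m) * f t + deriv f t * (((M - t) ^ 2 - (m - t) ^ 2) / 2)
        + c / 2 * (((M - t) ^ 3 - (m - t) ^ 3) / 3) := by
    intro c
    have e1 : IntervalIntegrable (fun z : ℝ => f t + (z - t) * deriv f t) volume m M := by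
      apply Continuous.intervalIntegrable; fun_prop
    have e2 : IntervalIntegrable (fun z : ℝ => c * (z - t) ^ 2 / 2) volume m M := by
      apply Continuous.intervalIntegrable; fun_prop
    have e3 : IntervalIntegrable (fun z : ℝ => (z - t) * deriv f t) volume m M := by
      apply Continuous.intervalIntegrable; fun_prop
    rw [intervalIntegral.integral_add e1 e2, intervalIntegral.integral_add
      (intervalIntegrable_const (c := f t)) e3]
    have h1 : (∫ z in m..M, (z - t) * deriv f t) = (((M - t) ^ 2 - (m - t) ^ 2) / 2) * deriv f t := by
      rw [intervalIntegral.integral_mul_const, I1]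
    have h2 : (∫ z in m..M, c * (z - t) ^ 2 / 2) = c / 2 * (((M - t) ^ 3 - (m - t) ^ 3) / 3) := by
      have : (fun z : ℝ => c * (z - t) ^ 2 / 2) = fun z : ℝ => (c / 2) * (z - t) ^ 2 := by
        funext z; ring
      rw [this, intervalIntegral.integral_const_mul, I2]
    rw [h1, h2, intervalIntegral.integral_const]
    simp
    ring
  -- lower bound on integral
  have hlow : (∫ z in m..M, (f t + (z - t) * deriv f t + k * (z - t) ^ 2 / 2)) ≤
      ∫ z in m..M, f z := by
    apply intervalIntegral.integral_mono_on hmM.le (hcint k) hfint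
    intro z hz
    have := aux_taylor_lb f a b m M k ham hMb hdiff1 hdiff2
      (fun w hw => (hbound w hw).1) t ht z hz
    linarith
  have hhigh : (∫ z in m..M, f z) ≤
      ∫ z in m..M, (f t + (z - t) * deriv f t + K * (z - t) ^ 2 / 2) := by
    apply intervalIntegral.integral_mono_on hmM.le hfint (hcint K)
    intro z hz
    have := aux_taylor_ub f a b m M K ham hMb hdiff1 hdiff2
      (fun w hw => (hbound w hw).2) t ht z hz
    linarith
  rw [IP k] at hlow
  rw [IP K] at hhigh
  have hdiv : (1 / (M - m)) * (∫ z in m..M, f z) = (∫ z in m..M, f z) / (M - m) := by ring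
  constructor
  · rw [ge_iff_le, hdiv]
    rw [sub_le_iff_le_add, sub_le_iff_le_add, div_le_iff₀ hMm]
    nlinarith [hhigh]
  · rw [ge_iff_le, hdiv, le_sub_iff_add_le, le_sub_iff_add_le, le_div_iff₀ hMm]
    nlinarith [hlow]
end

section
/- The variance of X satisfies 0 ≤ E[X²] − (E[X])² ≤ (M − E[X])·(E[X] − m) ≤ (1/4)(M − m)². -/
open MeasureTheory Real

theorem stmt_16 {Ω : Type*} [MeasurableSpace Ω] (P : Measure Ω) [IsProbabilityMeasure P]
    (X : Ω → ℝ) (m M : ℝ) (hmM : m < M)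
    (hX : ∀ᵐ ω ∂P, X ω ∈ Set.Icc m M)
    (hXint : Integrable X P)
    (hX2int : Integrable (fun ω => (X ω) ^ 2) P) :
    0 ≤ (∫ ω, (X ω) ^ 2 ∂P) - (∫ ω, X ω ∂P) ^ 2 ∧
    (∫ ω, (X ω) ^ 2 ∂P) - (∫ ω, X ω ∂P) ^ 2 ≤
      (M - (∫ ω, X ω ∂P)) * ((∫ ω, X ω ∂P) - m) ∧
    (M - (∫ ω, X ω ∂P)) * ((∫ ω, X ω ∂P) - m) ≤ (1 / 4) * (M - m) ^ 2 := by
  set I1 := ∫ ω, X ω ∂P with hI1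
  set I2 := ∫ ω, (X ω) ^ 2 ∂P with hI2
  have hconst : ∀ c : ℝ, ∫ _ : Ω, c ∂P = c := by
    intro c; simp
  have hexp : ∀ a b : ℝ, ∫ ω, ((X ω) ^ 2 + a * X ω + b) ∂P = I2 + a * I1 + b := by
    intro a b
    have A : Integrable (fun ω => X ω ^ 2 + a * X ω) P := hX2int.add (hXint.const_mul a)
    rw [integral_add A (integrable_const b), integral_add hX2int (hXint.const_mul a),
      integral_const_mul, hconst]
  have h1 : 0 ≤ I2 + (-2 * I1) * I1 + I1 ^ 2 := by
    rw [← hexp]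
    refine integral_nonneg fun ω => ?_
    simp only [Pi.zero_apply]
    nlinarith [sq_nonneg (X ω - I1)]
  have h4 : 0 ≤ ∫ ω, ((M - X ω) * (X ω - m)) ∂P := by
    refine integral_nonneg_of_ae ?_
    filter_upwards [hX] with ω ⟨h₁, h₂⟩
    simp only [Pi.zero_apply]
    exact mul_nonneg (sub_nonneg.mpr h₂) (sub_nonneg.mpr h₁)
  have h5 : ∫ ω, ((M - X ω) * (X ω - m)) ∂P = -(I2 + (-(M + m)) * I1 + M * m) := by
    rw [← hexp]
    rw [← integral_neg]
    congr 1; funext ω; ring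
  have h2 : I2 + (-(M + m)) * I1 + M * m ≤ 0 := by rw [h5] at h4; linarith
  exact ⟨by nlinarith, by nlinarith, by nlinarith [sq_nonneg (M + m - 2 * I1)]⟩
end

section
/- Let 0 < m < M and p > 1. Then 0 ≤ E[X^p] − (E[X])^p ≤ p·(M − E[X])·(E[X] − m)·(M^{p−1} − m^{p−1})/(M − m) ≤ (p/4)·(M − m)·(M^{p−1} − m^{p−1}). -/
open MeasureTheory Real

/-- Tangent line inequality for `rpow`: for `0 < a`, `0 ≤ b`, `1 ≤ p`,
`a ^ p + p * a ^ (p - 1) * (b - a) ≤ b ^ p`. -/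
lemma tangent_rpow {p a b : ℝ} (hp : 1 ≤ p) (ha : 0 < a) (hb : 0 ≤ b) :
    a ^ p + p * a ^ (p - 1) * (b - a) ≤ b ^ p := by
  have hs : (-1 : ℝ) ≤ b / a - 1 := by
    have : 0 ≤ b / a := div_nonneg hb ha.le
    linarith
  have h := one_add_mul_self_le_rpow_one_add hs hp
  have h1 : (1 : ℝ) + (b / a - 1) = b / a := by ring
  rw [h1, Real.div_rpow hb ha.le] at h
  have hap : (0 : ℝ) < a ^ p := Real.rpow_pos_of_pos ha p
  have h2 : (1 + p * (b / a - 1)) * a ^ p ≤ b ^ p := by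
    calc (1 + p * (b / a - 1)) * a ^ p ≤ b ^ p / a ^ p * a ^ p := by
          exact mul_le_mul_of_nonneg_right h hap.le
      _ = b ^ p := div_mul_cancel₀ _ hap.ne'
  have h3 : a ^ (p - 1) * a = a ^ p := by
    rw [show a ^ (p - 1) * a = a ^ (p - 1) * a ^ (1:ℝ) by rw [Real.rpow_one],
      ← Real.rpow_add ha]
    norm_num
  have h4 : (1 + p * (b / a - 1)) * a ^ p = a ^ p + p * a ^ (p - 1) * (b - a) := by
    rw [← h3]
    field_simp
  linarith [h2, h4.symm.le]

theorem stmt_17 {Ω : Type*} [MeasurableSpace Ω] (P : Measure Ω) [IsProbabilityMeasure P]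
    (X : Ω → ℝ) (m M : ℝ) (hm : 0 < m) (hmM : m < M)
    (hX : ∀ᵐ ω ∂P, X ω ∈ Set.Icc m M)
    (hXint : Integrable X P)
    (p : ℝ) (hp : 1 < p)
    (hXpint : Integrable (fun ω => X ω ^ p) P) :
    0 ≤ (∫ ω, X ω ^ p ∂P) - (∫ ω, X ω ∂P) ^ p ∧
    (∫ ω, X ω ^ p ∂P) - (∫ ω, X ω ∂P) ^ p ≤
      p * (M - (∫ ω, X ω ∂P)) * ((∫ ω, X ω ∂P) - m) * (M ^ (p - 1) - m ^ (p - 1)) / (M - m) ∧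
    p * (M - (∫ ω, X ω ∂P)) * ((∫ ω, X ω ∂P) - m) * (M ^ (p - 1) - m ^ (p - 1)) / (M - m) ≤
      p / 4 * (M - m) * (M ^ (p - 1) - m ^ (p - 1)) := by
  set μ := ∫ ω, X ω ∂P with hμ
  have hMm : (0:ℝ) < M - m := by linarith
  have hMmne : M - m ≠ 0 := hMm.ne'
  have hMpos : (0:ℝ) < M := hm.trans hmM
  -- μ ∈ [m, M]
  have hμm : m ≤ μ := by
    have : ∫ ω, (m : ℝ) ∂P ≤ ∫ ω, X ω ∂P := by
      refine integral_mono_ae (integrable_const m) hXint ?_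
      filter_upwards [hX] with ω hω; exact hω.1
    simpa using this
  have hμM : μ ≤ M := by
    have : ∫ ω, X ω ∂P ≤ ∫ ω, (M : ℝ) ∂P := by
      refine integral_mono_ae hXint (integrable_const M) ?_
      filter_upwards [hX] with ω hω; exact hω.2
    simpa using this
  have hμpos : 0 < μ := lt_of_lt_of_le hm hμm
  -- tangent at μ: Jensen lower bound
  have jensen : μ ^ p ≤ ∫ ω, X ω ^ p ∂P := by
    have key : ∀ᵐ ω ∂P, (μ ^ p - p * μ ^ (p-1) * μ) + (p * μ ^ (p-1)) * X ω ≤ X ω ^ p := by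
      filter_upwards [hX] with ω hω
      have := tangent_rpow hp.le hμpos (le_trans hm.le hω.1)
      linarith
    have hint : Integrable (fun ω => (μ ^ p - p * μ ^ (p-1) * μ) + (p * μ ^ (p-1)) * X ω) P :=
      (integrable_const _).add (hXint.const_mul _)
    have h := integral_mono_ae hint hXpint key
    rw [integral_add (integrable_const _) (hXint.const_mul _), integral_const,
      integral_const_mul] at h
    simp only [measure_univ, probReal_univ, ENNReal.toReal_one, smul_eq_mul, one_mul, ← hμ] at h
    linarith
  -- chord upper bound
  have chord : (∫ ω, X ω ^ p ∂P) ≤ ((M - μ) * m ^ p + (μ - m) * M ^ p) / (M - m) := by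
    have key : ∀ᵐ ω ∂P, X ω ^ p ≤
        (M * m ^ p - m * M ^ p) / (M - m) + (M ^ p - m ^ p) / (M - m) * X ω := by
      filter_upwards [hX] with ω hω
      have h1 : (0:ℝ) ≤ (M - X ω) / (M - m) := div_nonneg (by linarith [hω.2]) hMm.le
      have h2 : (0:ℝ) ≤ (X ω - m) / (M - m) := div_nonneg (by linarith [hω.1]) hMm.le
      have h3 : (M - X ω) / (M - m) + (X ω - m) / (M - m) = 1 := by
        field_simp
        ring
      have hc := (convexOn_rpow hp.le).2 (Set.mem_Ici.2 hm.le)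
        (Set.mem_Ici.2 hMpos.le) h1 h2 h3
      simp only [smul_eq_mul] at hc
      have hx : (M - X ω) / (M - m) * m + (X ω - m) / (M - m) * M = X ω := by
        field_simp
        ring
      rw [hx] at hc
      have heq : (M - X ω) / (M - m) * m ^ p + (X ω - m) / (M - m) * M ^ p =
          (M * m ^ p - m * M ^ p) / (M - m) + (M ^ p - m ^ p) / (M - m) * X ω := by
        field_simp
        ring
      calc X ω ^ p ≤ (M - X ω) / (M - m) * m ^ p + (X ω - m) / (M - m) * M ^ p := hc
        _ = _ := heq
    have hint : Integrable (fun ω =>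
        (M * m ^ p - m * M ^ p) / (M - m) + (M ^ p - m ^ p) / (M - m) * X ω) P :=
      (integrable_const _).add (hXint.const_mul _)
    have h := integral_mono_ae hXpint hint key
    rw [integral_add (integrable_const _) (hXint.const_mul _), integral_const,
      integral_const_mul] at h
    simp only [measure_univ, probReal_univ, ENNReal.toReal_one, smul_eq_mul, one_mul, ← hμ] at h
    have heq2 : (M * m ^ p - m * M ^ p) / (M - m) + (M ^ p - m ^ p) / (M - m) * μ =
        ((M - μ) * m ^ p + (μ - m) * M ^ p) / (M - m) := by
      field_simp
      ring
    linarith [heq2 ▸ h]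
  -- tangent inequalities at m and M evaluated at μ
  have tm : m ^ p + p * m ^ (p-1) * (μ - m) ≤ μ ^ p := tangent_rpow hp.le hm hμpos.le
  have tM : M ^ p + p * M ^ (p-1) * (μ - M) ≤ μ ^ p := tangent_rpow hp.le hMpos hμpos.le
  have hD : 0 ≤ M ^ (p-1) - m ^ (p-1) := by
    have := Real.rpow_le_rpow hm.le hmM.le (by linarith : (0:ℝ) ≤ p - 1)
    linarith
  have hpp : (0:ℝ) < p := by linarith
  have chord' : (∫ ω, X ω ^ p ∂P) * (M - m) ≤ (M - μ) * m ^ p + (μ - m) * M ^ p :=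
    (le_div_iff₀ hMm).mp chord
  refine ⟨by linarith, ?_, ?_⟩
  · rw [le_div_iff₀ hMm]
    nlinarith [mul_le_mul_of_nonneg_left tm (by linarith : (0:ℝ) ≤ M - μ),
      mul_le_mul_of_nonneg_left tM (by linarith : (0:ℝ) ≤ μ - m)]
  · rw [div_le_iff₀ hMm]
    have amgm : (M - μ) * (μ - m) ≤ (M - m)^2 / 4 := by
      nlinarith [sq_nonneg (M + m - 2*μ)]
    nlinarith [mul_le_mul_of_nonneg_left amgm (mul_nonneg hpp.le hD)]
end

section
/- Let 0 < m < M. Then 0 ≤ ln(E[X]) − E[ln X] ≤ (M − E[X])·(E[X] − m)/(m·M) ≤ (M − m)²/(4·m·M). -/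
open MeasureTheory Real

theorem stmt_18 {Ω : Type*} [MeasurableSpace Ω] (P : Measure Ω) [IsProbabilityMeasure P]
    (X : Ω → ℝ) (m M : ℝ) (hm : 0 < m) (hmM : m < M)
    (hX : ∀ᵐ ω ∂P, X ω ∈ Set.Icc m M)
    (hXint : Integrable X P)
    (hlogint : Integrable (fun ω => Real.log (X ω)) P) :
    0 ≤ Real.log (∫ ω, X ω ∂P) - (∫ ω, Real.log (X ω) ∂P) ∧
    Real.log (∫ ω, X ω ∂P) - (∫ ω, Real.log (X ω) ∂P) ≤
      (M - (∫ ω, X ω ∂P)) * ((∫ ω, X ω ∂P) - m) / (m * M) ∧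
    (M - (∫ ω, X ω ∂P)) * ((∫ ω, X ω ∂P) - m) / (m * M) ≤ (M - m) ^ 2 / (4 * m * M) := by
  set I := ∫ ω, X ω ∂P with hIdef
  have hmI : m ≤ I := by
    have h := integral_mono_ae (integrable_const m) hXint (hX.mono fun ω h => h.1)
    simpa using h
  have hIM : I ≤ M := by
    have h := integral_mono_ae hXint (integrable_const M) (hX.mono fun ω h => h.2)
    simpa using h
  have hI : 0 < I := lt_of_lt_of_le hm hmI
  have hMpos : 0 < M := hm.trans hmM
  have hmM0 : (0:ℝ) < m * M := mul_pos hm hMpos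
  -- Part 1
  have hgint1 : Integrable (fun ω => Real.log I + (X ω - I) / I) P :=
    (integrable_const _).add ((hXint.sub (integrable_const I)).div_const I)
  have h1 : (∫ ω, Real.log (X ω) ∂P) ≤ Real.log I := by
    have hle : ∀ᵐ ω ∂P, Real.log (X ω) ≤ Real.log I + (X ω - I) / I := by
      filter_upwards [hX] with ω h
      have hx : 0 < X ω := lt_of_lt_of_le hm h.1
      have hlog := Real.log_le_sub_one_of_pos (div_pos hx hI)
      rw [Real.log_div hx.ne' hI.ne'] at hlog
      have h2 : X ω / I - 1 = (X ω - I) / I := by field_simp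
      linarith [hlog, h2.le]
    have e1 : Integrable (fun ω => (X ω - I) / I) P :=
      (hXint.sub (integrable_const I)).div_const I
    have h := integral_mono_ae hlogint hgint1 hle
    calc (∫ ω, Real.log (X ω) ∂P) ≤ ∫ ω, (Real.log I + (X ω - I) / I) ∂P := h
      _ = Real.log I := by
          rw [integral_add (integrable_const _) e1,
            integral_div, integral_sub hXint (integrable_const I)]
          simp [← hIdef]
  -- Part 2
  set a : ℝ := Real.log I + 1 - I * (m + M) / (m * M) with ha
  set b : ℝ := I / (m * M) with hb
  have hgint2 : Integrable (fun ω => a + b * X ω) P :=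
    (integrable_const _).add (hXint.const_mul b)
  have h2 : a + b * I ≤ ∫ ω, Real.log (X ω) ∂P := by
    have hle : ∀ᵐ ω ∂P, a + b * X ω ≤ Real.log (X ω) := by
      filter_upwards [hX] with ω h
      have hx : 0 < X ω := lt_of_lt_of_le hm h.1
      have hlog := Real.log_le_sub_one_of_pos (div_pos hI hx)
      rw [Real.log_div hI.ne' hx.ne'] at hlog
      -- I / X ω ≤ I * (m + M - X ω) / (m * M)
      have hkey : I / X ω ≤ I * (m + M - X ω) / (m * M) := by
        rw [div_le_div_iff₀ hx hmM0]
        nlinarith [mul_nonneg (sub_nonneg.2 h.2) (sub_nonneg.2 h.1), hI.le, hx.le]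
      have : a + b * X ω ≤ Real.log (X ω) := by
        rw [ha, hb]
        have h3 : I * (m + M) / (m * M) - I / (m * M) * X ω = I * (m + M - X ω) / (m * M) := by
          field_simp
        nlinarith [hlog, hkey]
      exact this
    have h := integral_mono_ae hgint2 hlogint hle
    have e2 : Integrable (fun ω => b * X ω) P := hXint.const_mul b
    calc a + b * I = ∫ ω, (a + b * X ω) ∂P := by
          rw [integral_add (integrable_const _) e2, integral_const_mul]
          simp [← hIdef]
      _ ≤ ∫ ω, Real.log (X ω) ∂P := h
  refine ⟨by linarith, ?_, ?_⟩
  · have heq : Real.log I - (a + b * I) = (M - I) * (I - m) / (m * M) := by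
      rw [ha, hb]
      field_simp
      ring
    clear_value a b
    linarith [heq, h2]
  · rw [div_le_div_iff₀ hmM0 (by positivity)]
    nlinarith [sq_nonneg (M + m - 2 * I), hmM0.le]
end

section
/- Let 0 < m < M. Then (1/(2m²))·(E[X²] − (E[X])²) ≥ ln(E[X]) − E[ln X] ≥ (1/(2M²))·(E[X²] − (E[X])²). -/
open MeasureTheory Real

private lemma aux_deriv1_s19 {c x : ℝ} (hc : c ≠ 0) (hx : x ≠ 0) :
    HasDerivAt (fun t : ℝ => t ^ 2 / c + Real.log t) (2 * x / c + x⁻¹) x := by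
  have h1 : HasDerivAt (fun t : ℝ => t ^ 2 / c) (2 * x / c) x := by
    have := (hasDerivAt_pow 2 x).div_const c
    refine this.congr_deriv ?_
    push_cast; ring
  exact h1.add (Real.hasDerivAt_log hx)

private lemma aux_deriv2_s19 {c x : ℝ} (hc : c ≠ 0) (hx : x ≠ 0) :
    HasDerivAt (fun t : ℝ => 2 * t / c + t⁻¹) (2 / c - (x ^ 2)⁻¹) x := by
  have h1 : HasDerivAt (fun t : ℝ => 2 * t / c) (2 / c) x := by
    have := ((hasDerivAt_id x).const_mul 2).div_const c
    refine this.congr_deriv ?_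
    ring
  simpa [sub_eq_add_neg] using h1.fun_add (hasDerivAt_inv hx)

private lemma aux_convex1 {m M : ℝ} (hm : 0 < m) (hmM : m < M) :
    ConvexOn ℝ (Set.Icc m M) (fun t => t ^ 2 / (2 * m ^ 2) + Real.log t) := by
  have hc : (2 * m ^ 2 : ℝ) ≠ 0 := by positivity
  have hsub : Set.Icc m M ⊆ {(0:ℝ)}ᶜ := fun t ht => by
    simp only [Set.mem_compl_iff, Set.mem_singleton_iff]
    have := ht.1; intro h; subst h; linarith
  apply convexOn_of_hasDerivWithinAt2_nonneg (f' := fun t => 2 * t / (2 * m ^ 2) + t⁻¹)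
    (f'' := fun t => 2 / (2 * m ^ 2) - (t ^ 2)⁻¹) (convex_Icc m M)
  · exact ((continuousOn_id.pow 2).div_const _).add (Real.continuousOn_log.mono hsub)
  · intro x hx
    rw [interior_Icc] at hx
    have hx0 : x ≠ 0 := by intro h; subst h; linarith [hx.1]
    exact (aux_deriv1_s19 hc hx0).hasDerivWithinAt
  · intro x hx
    rw [interior_Icc] at hx
    have hx0 : x ≠ 0 := by intro h; subst h; linarith [hx.1]
    exact (aux_deriv2_s19 hc hx0).hasDerivWithinAt
  · intro x hx
    rw [interior_Icc] at hx
    have h1 : 0 < x := lt_trans hm hx.1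
    have h2 : m ≤ x := le_of_lt hx.1
    have : (x ^ 2)⁻¹ ≤ 2 / (2 * m ^ 2) := by
      rw [inv_le_iff_one_le_mul₀ (by positivity), div_mul_eq_mul_div, le_div_iff₀ (by positivity)]
      nlinarith
    linarith

private lemma aux_convex2 {m M : ℝ} (hm : 0 < m) (hmM : m < M) :
    ConvexOn ℝ (Set.Icc m M) (fun t => -Real.log t - t ^ 2 / (2 * M ^ 2)) := by
  have hM : (0:ℝ) < M := lt_trans hm hmM
  have hc : (2 * M ^ 2 : ℝ) ≠ 0 := by positivity
  have hsub : Set.Icc m M ⊆ {(0:ℝ)}ᶜ := fun t ht => by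
    simp only [Set.mem_compl_iff, Set.mem_singleton_iff]
    have := ht.1; intro h; subst h; linarith
  apply convexOn_of_hasDerivWithinAt2_nonneg (f' := fun t => -t⁻¹ - 2 * t / (2 * M ^ 2))
    (f'' := fun t => (t ^ 2)⁻¹ - 2 / (2 * M ^ 2)) (convex_Icc m M)
  · exact ((Real.continuousOn_log.mono hsub).neg).sub ((continuousOn_id.pow 2).div_const _)
  · intro x hx
    rw [interior_Icc] at hx
    have hx0 : x ≠ 0 := by intro h; subst h; linarith [hx.1]
    have := (aux_deriv1_s19 hc hx0).fun_neg
    have h2 : (fun t : ℝ => -(t ^ 2 / (2 * M ^ 2) + Real.log t)) =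
        fun t : ℝ => -Real.log t - t ^ 2 / (2 * M ^ 2) := by funext t; ring
    rw [h2] at this
    have h3 : -(2 * x / (2 * M ^ 2) + x⁻¹) = -x⁻¹ - 2 * x / (2 * M ^ 2) := by ring
    rw [h3] at this
    exact this.hasDerivWithinAt
  · intro x hx
    rw [interior_Icc] at hx
    have hx0 : x ≠ 0 := by intro h; subst h; linarith [hx.1]
    have := (aux_deriv2_s19 hc hx0).fun_neg
    have h2 : (fun t : ℝ => -(2 * t / (2 * M ^ 2) + t⁻¹)) =
        fun t : ℝ => -t⁻¹ - 2 * t / (2 * M ^ 2) := by funext t; ring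
    rw [h2] at this
    have h3 : -(2 / (2 * M ^ 2) - (x ^ 2)⁻¹) = (x ^ 2)⁻¹ - 2 / (2 * M ^ 2) := by ring
    rw [h3] at this
    exact this.hasDerivWithinAt
  · intro x hx
    rw [interior_Icc] at hx
    have h1 : 0 < x := lt_trans hm hx.1
    have h2 : x ≤ M := le_of_lt hx.2
    have : 2 / (2 * M ^ 2) ≤ (x ^ 2)⁻¹ := by
      rw [div_le_iff₀ (by positivity), ← div_eq_inv_mul, le_div_iff₀ (by positivity)]
      nlinarith
    linarith

theorem stmt_19 {Ω : Type*} [MeasurableSpace Ω] (P : Measure Ω) [IsProbabilityMeasure P]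
    (X : Ω → ℝ) (m M : ℝ) (hm : 0 < m) (hmM : m < M)
    (hX : ∀ᵐ ω ∂P, X ω ∈ Set.Icc m M)
    (hXint : Integrable X P)
    (hX2int : Integrable (fun ω => (X ω) ^ 2) P)
    (hlogint : Integrable (fun ω => Real.log (X ω)) P) :
    1 / (2 * m ^ 2) * ((∫ ω, (X ω) ^ 2 ∂P) - (∫ ω, X ω ∂P) ^ 2) ≥
      Real.log (∫ ω, X ω ∂P) - (∫ ω, Real.log (X ω) ∂P) ∧
    Real.log (∫ ω, X ω ∂P) - (∫ ω, Real.log (X ω) ∂P) ≥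
      1 / (2 * M ^ 2) * ((∫ ω, (X ω) ^ 2 ∂P) - (∫ ω, X ω ∂P) ^ 2) := by
  have hM : (0:ℝ) < M := lt_trans hm hmM
  have hsub : Set.Icc m M ⊆ {(0:ℝ)}ᶜ := fun t ht => by
    simp only [Set.mem_compl_iff, Set.mem_singleton_iff]
    have := ht.1; intro h; subst h; linarith
  have hint1 : Integrable ((fun t => t ^ 2 / (2 * m ^ 2) + Real.log t) ∘ X) P := by
    show Integrable (fun ω => (X ω) ^ 2 / (2 * m ^ 2) + Real.log (X ω)) P
    exact (hX2int.div_const _).add hlogint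
  have hint2 : Integrable ((fun t => -Real.log t - t ^ 2 / (2 * M ^ 2)) ∘ X) P := by
    show Integrable (fun ω => -Real.log (X ω) - (X ω) ^ 2 / (2 * M ^ 2)) P
    exact hlogint.neg.sub (hX2int.div_const _)
  have j1 := (aux_convex1 hm hmM).map_integral_le
    (((continuousOn_id.pow 2).div_const _).add (Real.continuousOn_log.mono hsub))
    isClosed_Icc hX hXint hint1
  have j2 := (aux_convex2 hm hmM).map_integral_le
    (((Real.continuousOn_log.mono hsub).neg).sub ((continuousOn_id.pow 2).div_const _))
    isClosed_Icc hX hXint hint2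
  beta_reduce at j1 j2
  rw [integral_add (hX2int.div_const _) hlogint, integral_div] at j1
  have e2 : (∫ ω, (-Real.log (X ω) - (X ω) ^ 2 / (2 * M ^ 2)) ∂P) =
      -(∫ ω, Real.log (X ω) ∂P) - (∫ ω, (X ω) ^ 2 ∂P) / (2 * M ^ 2) := by
    have hneg : Integrable (fun ω => -Real.log (X ω)) P := hlogint.neg
    rw [integral_sub hneg (hX2int.div_const _), integral_neg, integral_div]
  rw [e2] at j2
  constructor
  · have h : 1 / (2 * m ^ 2) * ((∫ ω, (X ω) ^ 2 ∂P) - (∫ ω, X ω ∂P) ^ 2) =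
        (∫ ω, (X ω) ^ 2 ∂P) / (2 * m ^ 2) - (∫ ω, X ω ∂P) ^ 2 / (2 * m ^ 2) := by ring
    rw [ge_iff_le, h]
    linarith
  · have h : 1 / (2 * M ^ 2) * ((∫ ω, (X ω) ^ 2 ∂P) - (∫ ω, X ω ∂P) ^ 2) =
        (∫ ω, (X ω) ^ 2 ∂P) / (2 * M ^ 2) - (∫ ω, X ω ∂P) ^ 2 / (2 * M ^ 2) := by ring
    rw [ge_iff_le, h]
    linarith
end
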